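/- arXiv:2407.15997 — 10 statements merged into one kernel-verified Lean document; each statement's English description precedes it below -/
import Mathlib

section
/- Let Ω ⊆ ℂ^d be open and let 𝒳 be a Hausdorff topological vector space of holomorphic functions on Ω satisfying (P1)–(P3). If S = (S_1,…,S_d) is the d-tuple of shift operators on 𝒳, then Ω ⊆ Ω_max ⊆ σ_R(S), where σ_R(S) is the right Harte spectrum of S. -/
/-!
A Hausdorff topological vector space `X` of holomorphic functions on an open set
`Ω ⊆ ℂ^d` satisfying (P1) (polynomials are dense), (P2) (point evaluations at points
of `Ω` are continuous) and (P3) (the shift operators, and hence multiplication by any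
polynomial, are continuous linear self maps).
-/
structure HoloFunSpace (d : ℕ) (Ω : Set (Fin d → ℂ)) (X : Type*)
    [AddCommGroup X] [Module ℂ X] [TopologicalSpace X] where
  /-- The realization of elements of `X` as (holomorphic) functions on `Ω`. -/
  toFun : X →ₗ[ℂ] ((Fin d → ℂ) → ℂ)
  holo : ∀ F : X, DifferentiableOn ℂ (toFun F) Ω
  inj : ∀ F G : X, Set.EqOn (toFun F) (toFun G) Ω → F = G
  /-- The polynomials, as elements of `X`. -/
  poly : MvPolynomial (Fin d) ℂ →ₗ[ℂ] X
  poly_eval : ∀ (P : MvPolynomial (Fin d) ℂ), ∀ z ∈ Ω,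
    toFun (poly P) z = MvPolynomial.eval z P
  /-- (P1): polynomials are dense in `X`. -/
  dense_poly : Dense (Set.range fun P : MvPolynomial (Fin d) ℂ => poly P)
  /-- (P2): point evaluations at points of `Ω` are continuous. -/
  eval_cont : ∀ z ∈ Ω, Continuous fun F : X => toFun F z
  /-- Multiplication by a polynomial, a continuous linear self map of `X`;
  (P3) is the special case of the shifts `mul (X j)`. -/
  mul : MvPolynomial (Fin d) ℂ → X →L[ℂ] X
  mul_eval : ∀ (P : MvPolynomial (Fin d) ℂ) (F : X), ∀ z ∈ Ω,
    toFun (mul P F) z = MvPolynomial.eval z P * toFun F z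

namespace HoloFunSpace

variable {d : ℕ} {Ω : Set (Fin d → ℂ)} {X : Type*}
  [AddCommGroup X] [Module ℂ X] [TopologicalSpace X]

/-- The maximal domain `Ω_max`: all `w ∈ ℂ^d` such that evaluation at `w`, defined on
polynomials, extends to a continuous linear functional on `X`. -/
def maxDomain (H : HoloFunSpace d Ω X) : Set (Fin d → ℂ) :=
  {w | ∃ Λ : X →L[ℂ] ℂ, ∀ P : MvPolynomial (Fin d) ℂ, Λ (H.poly P) = MvPolynomial.eval w P}

end HoloFunSpace

open HoloFunSpace in
/-- `Ω ⊆ Ω_max ⊆ σ_R(S)`, i.e. `Ω ⊆ Ω_max` and no point of `Ω_max`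
belongs to the right Harte resolvent set of the tuple of shifts `S = (S_1, …, S_d)`. -/
theorem maxDomain_subset_rightHarteSpectrum
    {d : ℕ} {Ω : Set (Fin d → ℂ)} {X : Type*}
    [AddCommGroup X] [Module ℂ X] [TopologicalSpace X]
    [IsTopologicalAddGroup X] [ContinuousSMul ℂ X] [T2Space X]
    (hΩ : IsOpen Ω) (H : HoloFunSpace d Ω X) :
    Ω ⊆ H.maxDomain ∧
      ∀ w ∈ H.maxDomain,
        ¬ ∃ A : Fin d → (X →L[ℂ] X),
            (∑ j, (H.mul (MvPolynomial.X j) - w j • ContinuousLinearMap.id ℂ X).comp (A j))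
              = ContinuousLinearMap.id ℂ X := by
  constructor
  · intro w hw
    refine ⟨⟨{ toFun := fun F => H.toFun F w,
               map_add' := fun F G => by simp [map_add],
               map_smul' := fun c F => by simp [map_smul] }, H.eval_cont w hw⟩,
           fun P => H.poly_eval P w hw⟩
  · rintro w ⟨Λ, hΛ⟩ ⟨A, hA⟩
    have hmulpoly : ∀ (j : Fin d) (P : MvPolynomial (Fin d) ℂ),
        H.mul (MvPolynomial.X j) (H.poly P) = H.poly (MvPolynomial.X j * P) := by
      intro j P
      apply H.inj
      intro z hz
      simp [H.mul_eval _ _ z hz, H.poly_eval _ z hz]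
    have key : ∀ (j : Fin d) (F : X),
        Λ ((H.mul (MvPolynomial.X j) - w j • ContinuousLinearMap.id ℂ X) F) = 0 := by
      intro j
      have hcont : Continuous fun F : X =>
          Λ ((H.mul (MvPolynomial.X j) - w j • ContinuousLinearMap.id ℂ X) F) :=
        Λ.continuous.comp (H.mul (MvPolynomial.X j) - w j • ContinuousLinearMap.id ℂ X).continuous
      have heq : Set.EqOn
          (fun F : X => Λ ((H.mul (MvPolynomial.X j) - w j • ContinuousLinearMap.id ℂ X) F))
          (fun _ : X => (0 : ℂ))
          (Set.range fun P : MvPolynomial (Fin d) ℂ => H.poly P) := by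
        rintro _ ⟨P, rfl⟩
        simp only [ContinuousLinearMap.sub_apply, ContinuousLinearMap.smul_apply,
          ContinuousLinearMap.id_apply, map_sub, map_smul, hmulpoly j P, hΛ, smul_eq_mul]
        simp [MvPolynomial.eval_mul]
      have := Continuous.ext_on H.dense_poly hcont continuous_const heq
      exact fun F => congrFun this F
    have h1 : Λ (H.poly 1) = 1 := by simpa using hΛ 1
    have h0 : Λ (H.poly 1) = 0 := by
      have h := congrArg (fun T : X →L[ℂ] X => Λ (T (H.poly 1))) hA
      simp only [ContinuousLinearMap.id_apply] at h
      rw [← h]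
      simp only [ContinuousLinearMap.sum_apply, ContinuousLinearMap.comp_apply, map_sum]
      exact Finset.sum_eq_zero fun j _ => key j _
    rw [h1] at h0
    exact one_ne_zero h0
end

section
/- Let Ω ⊆ ℂ^d be open and let 𝒳 be a Hausdorff topological vector space of holomorphic functions on Ω satisfying (P1)–(P3). Then Ω_max ⊆ Ω_env, i.e., if w ∈ Ω_max then every cyclic polynomial P satisfies P(w) ≠ 0. -/
namespace HoloFunSpace

variable {d : ℕ} {Ω : Set (Fin d → ℂ)} {X : Type*}
  [AddCommGroup X] [Module ℂ X] [TopologicalSpace X]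

/-- The invariant subspace `S[F]`: the closure of `{P · F : P ∈ 𝒫_d}`. -/
def invSub (H : HoloFunSpace d Ω X) (F : X) : Set X :=
  closure (Set.range fun P : MvPolynomial (Fin d) ℂ => H.mul P F)

/-- `F` is cyclic if `S[F] = X`. -/
def Cyclic (H : HoloFunSpace d Ω X) (F : X) : Prop := H.invSub F = Set.univ

/-- The joint invariant subspace `S[𝓕]`: the closed linear span of `⋃_{F ∈ 𝓕} S[F]`. -/
def jointInvSub (H : HoloFunSpace d Ω X) (𝓕 : Set X) : Set X :=
  closure (Submodule.span ℂ (⋃ F ∈ 𝓕, H.invSub F) : Set X)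

/-- A family `𝓕` is jointly cyclic if `S[𝓕] = X`. -/
def JointlyCyclic (H : HoloFunSpace d Ω X) (𝓕 : Set X) : Prop :=
  H.jointInvSub 𝓕 = Set.univ

end HoloFunSpace

open HoloFunSpace in
/-- `Ω_max ⊆ Ω_env`: if `w ∈ Ω_max` then every cyclic polynomial `P`
satisfies `P(w) ≠ 0`. -/
theorem maxDomain_subset_envDomain
    {d : ℕ} {Ω : Set (Fin d → ℂ)} {X : Type*}
    [AddCommGroup X] [Module ℂ X] [TopologicalSpace X]
    [IsTopologicalAddGroup X] [ContinuousSMul ℂ X] [T2Space X]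
    (hΩ : IsOpen Ω) (H : HoloFunSpace d Ω X) :
    ∀ w ∈ H.maxDomain, ∀ P : MvPolynomial (Fin d) ℂ,
      H.Cyclic (H.poly P) → MvPolynomial.eval w P ≠ 0 := by
  rintro w ⟨Λ, hΛ⟩ P hcyc hP0
  -- `poly (Q * P) = mul Q (poly P)` since they agree on Ω
  have hmul : ∀ Q : MvPolynomial (Fin d) ℂ, H.poly (Q * P) = H.mul Q (H.poly P) := by
    intro Q
    apply H.inj
    intro z hz
    rw [H.poly_eval _ z hz, H.mul_eval _ _ z hz, H.poly_eval _ z hz,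
      MvPolynomial.eval_mul]
  -- Λ vanishes on the range of Q ↦ mul Q (poly P)
  have hrange : (Set.range fun Q : MvPolynomial (Fin d) ℂ => H.mul Q (H.poly P))
      ⊆ Λ ⁻¹' {0} := by
    rintro _ ⟨Q, rfl⟩
    simp only [Set.mem_preimage, Set.mem_singleton_iff]
    rw [← hmul Q, hΛ, MvPolynomial.eval_mul, hP0, mul_zero]
  -- hence on the closure, which is everything by cyclicity
  have hclosed : IsClosed (Λ ⁻¹' ({0} : Set ℂ)) := isClosed_singleton.preimage Λ.continuous
  have hall : (Set.univ : Set X) ⊆ Λ ⁻¹' {0} := by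
    rw [← hcyc]
    exact hclosed.closure_subset_iff.mpr hrange
  have h1 : Λ (H.poly 1) = 0 := hall (Set.mem_univ _)
  rw [hΛ, map_one] at h1
  exact one_ne_zero h1
end

section
/- Let Ω ⊆ ℂ^d be open and let 𝒳 be a Hausdorff topological vector space of holomorphic functions on Ω satisfying (P1)–(P3). For a polynomial P ∈ 𝒫_d and F ∈ 𝒳, the product PF is cyclic in 𝒳 if and only if both P and F are cyclic in 𝒳. -/
open HoloFunSpace in
/-- For a polynomial `P` and `F ∈ X`, the product `P · F` is cyclic
if and only if both `P` and `F` are cyclic. -/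
theorem cyclic_mul_iff
    {d : ℕ} {Ω : Set (Fin d → ℂ)} {X : Type*}
    [AddCommGroup X] [Module ℂ X] [TopologicalSpace X]
    [IsTopologicalAddGroup X] [ContinuousSMul ℂ X] [T2Space X]
    (hΩ : IsOpen Ω) (H : HoloFunSpace d Ω X)
    (P : MvPolynomial (Fin d) ℂ) (F : X) :
    H.Cyclic (H.mul P F) ↔ (H.Cyclic (H.poly P) ∧ H.Cyclic F) := by
  -- Key algebraic lemmas
  have L1 : ∀ (A B : MvPolynomial (Fin d) ℂ) (G : X),
      H.mul A (H.mul B G) = H.mul (A * B) G := by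
    intro A B G
    apply H.inj
    intro z hz
    rw [H.mul_eval _ _ z hz, H.mul_eval _ _ z hz, H.mul_eval _ _ z hz, map_mul]
    ring
  have L2 : ∀ (A B : MvPolynomial (Fin d) ℂ),
      H.mul A (H.poly B) = H.mul B (H.poly A) := by
    intro A B
    apply H.inj
    intro z hz
    rw [H.mul_eval _ _ z hz, H.mul_eval _ _ z hz, H.poly_eval _ z hz, H.poly_eval _ z hz]
    ring
  -- continuity of mul pushes closures
  have himg : ∀ (A : MvPolynomial (Fin d) ℂ) (S : Set X) (G : X), G ∈ closure S →
      H.mul A G ∈ closure ((H.mul A) '' S) := by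
    intro A S G hG
    exact image_closure_subset_closure_image (H.mul A).continuous ⟨G, hG, rfl⟩
  -- every `mul A G` lies in `S[poly A]`
  have LB : ∀ (A : MvPolynomial (Fin d) ℂ) (G : X), H.mul A G ∈ H.invSub (H.poly A) := by
    intro A G
    have hG : G ∈ closure (Set.range fun Q : MvPolynomial (Fin d) ℂ => H.poly Q) :=
      H.dense_poly G
    have h1 := himg A _ G hG
    refine closure_mono ?_ h1
    rintro _ ⟨_, ⟨B, rfl⟩, rfl⟩
    exact ⟨B, (L2 A B).symm⟩
  constructor
  · intro hcyc
    constructor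
    · -- S[PF] ⊆ S[poly P]
      have hsub : H.invSub (H.mul P F) ⊆ H.invSub (H.poly P) := by
        refine closure_minimal ?_ isClosed_closure
        rintro _ ⟨Q, rfl⟩
        show H.mul Q (H.mul P F) ∈ _
        have : H.mul Q (H.mul P F) = H.mul P (H.mul Q F) := by
          rw [L1, L1, mul_comm]
        rw [this]
        exact LB P (H.mul Q F)
      exact Set.eq_univ_of_univ_subset (hcyc ▸ hsub)
    · -- S[PF] ⊆ S[F]
      have hsub : H.invSub (H.mul P F) ⊆ H.invSub F := by
        refine closure_minimal ?_ isClosed_closure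
        rintro _ ⟨Q, rfl⟩
        show H.mul Q (H.mul P F) ∈ _
        rw [L1]
        exact subset_closure ⟨Q * P, rfl⟩
      exact Set.eq_univ_of_univ_subset (hcyc ▸ hsub)
  · rintro ⟨hP, hF⟩
    -- every `mul P G` lies in `S[PF]`, since `X = S[F]`
    have hPX : ∀ G : X, H.mul P G ∈ H.invSub (H.mul P F) := by
      intro G
      have hG : G ∈ closure (Set.range fun Q : MvPolynomial (Fin d) ℂ => H.mul Q F) := by
        have : G ∈ H.invSub F := by rw [hF]; trivial
        exact this
      have h1 := himg P _ G hG
      refine closure_mono ?_ h1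
      rintro _ ⟨_, ⟨Q, rfl⟩, rfl⟩
      refine ⟨Q, ?_⟩
      show H.mul Q (H.mul P F) = _
      rw [L1, L1, mul_comm]
    -- hence S[poly P] ⊆ S[PF]
    have hsub : H.invSub (H.poly P) ⊆ H.invSub (H.mul P F) := by
      refine closure_minimal ?_ isClosed_closure
      rintro _ ⟨Q, rfl⟩
      show H.mul Q (H.poly P) ∈ _
      rw [← L2]
      exact hPX (H.poly Q)
    exact Set.eq_univ_of_univ_subset (hP ▸ hsub)
end

section
/- Let Ω ⊆ ℂ^d be open and let 𝒳 be a Hausdorff topological vector space of holomorphic functions on Ω satisfying (P1)–(P3). A polynomial P ∈ 𝒫_d is cyclic in 𝒳 if and only if every irreducible factor of P is cyclic in 𝒳. -/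
namespace HoloFunSpace

variable {d : ℕ} {Ω : Set (Fin d → ℂ)} {X : Type*}
  [AddCommGroup X] [Module ℂ X] [TopologicalSpace X]

variable (H : HoloFunSpace d Ω X)

lemma mul_poly (A B : MvPolynomial (Fin d) ℂ) :
    H.mul A (H.poly B) = H.poly (A * B) := by
  apply H.inj
  intro z hz
  rw [H.mul_eval A _ z hz, H.poly_eval B z hz, H.poly_eval _ z hz, map_mul]

lemma cyclic_of_dvd {P Q : MvPolynomial (Fin d) ℂ} (h : Q ∣ P)
    (hc : H.Cyclic (H.poly P)) : H.Cyclic (H.poly Q) := by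
  obtain ⟨R, rfl⟩ := h
  apply Set.eq_univ_of_univ_subset
  rw [← hc]
  apply closure_mono
  rintro _ ⟨S, rfl⟩
  refine ⟨S * R, ?_⟩
  beta_reduce
  rw [H.mul_poly, H.mul_poly]
  ring_nf

lemma cyclic_of_isUnit {P : MvPolynomial (Fin d) ℂ} (h : IsUnit P) :
    H.Cyclic (H.poly P) := by
  obtain ⟨v, hv, -⟩ := isUnit_iff_exists.mp h
  unfold HoloFunSpace.Cyclic HoloFunSpace.invSub
  have : (Set.range fun R : MvPolynomial (Fin d) ℂ => H.mul R (H.poly P)) =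
      Set.range fun Q : MvPolynomial (Fin d) ℂ => H.poly Q := by
    ext x
    constructor
    · rintro ⟨R, rfl⟩; exact ⟨R * P, (H.mul_poly R P).symm⟩
    · rintro ⟨S, rfl⟩
      exact ⟨S * v, by beta_reduce; rw [H.mul_poly, mul_assoc, mul_comm v P, hv, mul_one]⟩
  rw [this]
  exact H.dense_poly.closure_eq

lemma cyclic_mul {A B : MvPolynomial (Fin d) ℂ}
    (hA : H.Cyclic (H.poly A)) (hB : H.Cyclic (H.poly B)) :
    H.Cyclic (H.poly (A * B)) := by
  have h1 : Set.range (H.mul A) ⊆ H.invSub (H.poly (A * B)) := by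
    rintro _ ⟨F, rfl⟩
    have hF : F ∈ closure (Set.range fun S : MvPolynomial (Fin d) ℂ =>
        H.mul S (H.poly B)) := by
      have := hB
      unfold HoloFunSpace.Cyclic HoloFunSpace.invSub at this
      rw [this]; trivial
    have h2 : H.mul A F ∈ closure ((H.mul A) '' (Set.range fun S : MvPolynomial (Fin d) ℂ =>
        H.mul S (H.poly B))) :=
      (image_closure_subset_closure_image (H.mul A).continuous) ⟨F, hF, rfl⟩
    refine closure_mono ?_ h2
    rintro _ ⟨_, ⟨S, rfl⟩, rfl⟩
    refine ⟨S, ?_⟩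
    beta_reduce
    rw [H.mul_poly, H.mul_poly, H.mul_poly]
    ring_nf
  apply Set.eq_univ_of_univ_subset
  rw [← hA]
  apply closure_minimal _ isClosed_closure
  rintro _ ⟨R, rfl⟩
  exact h1 ⟨H.poly R, by beta_reduce; rw [H.mul_poly, H.mul_poly, mul_comm]⟩

lemma cyclic_of_factors : ∀ P : MvPolynomial (Fin d) ℂ, P ≠ 0 →
    (∀ Q : MvPolynomial (Fin d) ℂ, Irreducible Q → Q ∣ P → H.Cyclic (H.poly Q)) →
    H.Cyclic (H.poly P) := by
  intro P
  induction P using UniqueFactorizationMonoid.induction_on_prime with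
  | h₁ => intro h; exact absurd rfl h
  | h₂ u hu => intro _ _; exact H.cyclic_of_isUnit hu
  | h₃ a p ha hp ih =>
    intro _ hfac
    have hpc : H.Cyclic (H.poly p) := hfac p hp.irreducible (dvd_mul_right p a)
    have hac := ih ha (fun Q hQ hd => hfac Q hQ (hd.mul_left p))
    exact H.cyclic_mul hpc hac

end HoloFunSpace

open HoloFunSpace in
/-- A (nonzero) polynomial `P` is cyclic if and only if every
irreducible factor of `P` is cyclic. -/
theorem cyclic_iff_irreducible_factors_cyclic
    {d : ℕ} {Ω : Set (Fin d → ℂ)} {X : Type*}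
    [AddCommGroup X] [Module ℂ X] [TopologicalSpace X]
    [IsTopologicalAddGroup X] [ContinuousSMul ℂ X] [T2Space X]
    (hΩ : IsOpen Ω) (H : HoloFunSpace d Ω X)
    (P : MvPolynomial (Fin d) ℂ) (hP : P ≠ 0) :
    H.Cyclic (H.poly P) ↔
      ∀ Q : MvPolynomial (Fin d) ℂ, Irreducible Q → Q ∣ P → H.Cyclic (H.poly Q) := by
  constructor
  · intro hc Q _ hQP
    exact H.cyclic_of_dvd hQP hc
  · intro hfac
    exact H.cyclic_of_factors P hP hfac
end

section
/- Let Ω ⊆ ℂ^d be open and let 𝒳 be a Hausdorff topological vector space of holomorphic functions on Ω satisfying (P1)–(P3). For every w ∈ ℂ^d, one has 𝒳 = ℂ1 + S[ℱ_w], where ℱ_w = {z_j − w_j : 1 ≤ j ≤ d}; that is, every element of 𝒳 is the sum of a constant function and an element of the joint invariant subspace S[ℱ_w]. -/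
open MvPolynomial in
lemma sub_C_eval_mem_span {d : ℕ} (w : Fin d → ℂ) (P : MvPolynomial (Fin d) ℂ) :
    P - C (eval w P) ∈
      Ideal.span (Set.range fun j : Fin d => (X j - C (w j) : MvPolynomial (Fin d) ℂ)) := by
  set I := Ideal.span (Set.range fun j : Fin d => (X j - C (w j) : MvPolynomial (Fin d) ℂ))
  induction P using MvPolynomial.induction_on with
  | C a => simp
  | add p q hp hq =>
      have : p + q - C (eval w (p + q)) = (p - C (eval w p)) + (q - C (eval w q)) := by
        rw [map_add, map_add]; ring
      rw [this]; exact I.add_mem hp hq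
  | mul_X p j hp =>
      have : p * X j - C (eval w (p * X j))
          = p * (X j - C (w j)) + (p - C (eval w p)) * C (w j) := by
        rw [map_mul, eval_X, map_mul]; ring
      rw [this]
      exact I.add_mem (I.mul_mem_left p (Ideal.subset_span ⟨j, rfl⟩)) (I.mul_mem_right _ hp)

open HoloFunSpace in
/-- For every `w ∈ ℂ^d`, `X = ℂ·1 + S[ℱ_w]`, where
`ℱ_w = {z_j - w_j : 1 ≤ j ≤ d}`: every element of `X` is the sum of a constant
function and an element of the joint invariant subspace `S[ℱ_w]`. -/
theorem eq_const_add_jointInvSub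
    {d : ℕ} {Ω : Set (Fin d → ℂ)} {X : Type*}
    [AddCommGroup X] [Module ℂ X] [TopologicalSpace X]
    [IsTopologicalAddGroup X] [ContinuousSMul ℂ X] [T2Space X]
    (hΩ : IsOpen Ω) (H : HoloFunSpace d Ω X) (w : Fin d → ℂ) (F : X) :
    ∃ c : ℂ, ∃ G ∈ H.jointInvSub
        (Set.range fun j : Fin d => H.poly (MvPolynomial.X j - MvPolynomial.C (w j))),
      F = c • H.poly 1 + G := by
  classical
  set g : Fin d → MvPolynomial (Fin d) ℂ :=
    fun j => MvPolynomial.X j - MvPolynomial.C (w j) with hg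
  set 𝓕 : Set X := Set.range fun j : Fin d => H.poly (g j) with h𝓕
  set M : Submodule ℂ X := (Submodule.span ℂ (⋃ G ∈ 𝓕, H.invSub G)).topologicalClosure with hM
  have hMclosed : IsClosed (M : Set X) := Submodule.isClosed_topologicalClosure _
  have hmulpoly : ∀ (Q R : MvPolynomial (Fin d) ℂ), H.poly (Q * R) = H.mul Q (H.poly R) := by
    intro Q R
    apply H.inj
    intro z hz
    rw [H.poly_eval _ z hz, H.mul_eval _ _ z hz, H.poly_eval _ z hz, map_mul]
  have hpolyC : ∀ a : ℂ, H.poly (MvPolynomial.C a) = a • H.poly 1 := by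
    intro a
    rw [← map_smul]
    congr 1
    rw [MvPolynomial.smul_eq_C_mul, mul_one]
  have hpolyM : ∀ P : MvPolynomial (Fin d) ℂ,
      H.poly P - (MvPolynomial.eval w P) • H.poly 1 ∈ M := by
    intro P
    obtain ⟨c, hc⟩ := (Ideal.mem_span_range_iff_exists_fun).1 (sub_C_eval_mem_span w P)
    have key : H.poly P - (MvPolynomial.eval w P) • H.poly 1
        = ∑ j, H.mul (c j) (H.poly (g j)) := by
      have : ∑ j, H.mul (c j) (H.poly (g j)) = ∑ j, H.poly (c j * g j) := by
        refine Finset.sum_congr rfl fun j _ => (hmulpoly (c j) (g j)).symm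
      rw [this, ← map_sum, hc, map_sub, hpolyC]
    rw [key]
    refine Submodule.sum_mem _ fun j _ => ?_
    refine Submodule.le_topologicalClosure _ (Submodule.subset_span ?_)
    refine Set.mem_biUnion (show H.poly (g j) ∈ 𝓕 from ⟨j, rfl⟩) ?_
    exact subset_closure ⟨c j, rfl⟩
  set N : Submodule ℂ X := Submodule.span ℂ {H.poly 1} ⊔ M with hN
  haveI : IsClosed (M : Set X) := hMclosed
  have hqc : Continuous M.mkQ := M.isOpenQuotientMap_mkQ.continuous
  have hNclosed : IsClosed (N : Set X) := by
    have h1 : N = Submodule.comap M.mkQ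
        (Submodule.map M.mkQ (Submodule.span ℂ {H.poly 1})) := by
      rw [Submodule.comap_map_eq, Submodule.ker_mkQ, hN]
    haveI : FiniteDimensional ℂ ((Submodule.span ℂ {H.poly 1}).map M.mkQ) :=
      Module.Finite.map _ _
    rw [h1]
    exact (Submodule.closed_of_finiteDimensional
      ((Submodule.span ℂ {H.poly 1}).map M.mkQ)).preimage hqc
  have hrange : Set.range (fun P : MvPolynomial (Fin d) ℂ => H.poly P) ⊆ (N : Set X) := by
    rintro _ ⟨P, rfl⟩
    show H.poly P ∈ (N : Set X)
    have h2 : H.poly P = (MvPolynomial.eval w P) • H.poly 1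
        + (H.poly P - (MvPolynomial.eval w P) • H.poly 1) := by abel
    rw [h2]
    exact N.add_mem
      (Submodule.mem_sup_left (Submodule.smul_mem _ _ (Submodule.mem_span_singleton_self _)))
      (Submodule.mem_sup_right (hpolyM P))
  have htop : ∀ x : X, x ∈ N := by
    intro x
    have : (Set.univ : Set X) ⊆ (N : Set X) := by
      rw [← H.dense_poly.closure_eq]
      exact closure_minimal hrange hNclosed
    exact this (Set.mem_univ x)
  obtain ⟨y, hy, z, hz, hyz⟩ := Submodule.mem_sup.1 (htop F)
  obtain ⟨c, rfl⟩ := Submodule.mem_span_singleton.1 hy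
  refine ⟨c, z, ?_, hyz.symm⟩
  have : (M : Set X) = H.jointInvSub 𝓕 := by
    rw [hM, HoloFunSpace.jointInvSub, Submodule.topologicalClosure_coe]
  rw [← this]
  exact hz
end

section
/- Let Ω ⊆ ℂ be open (one complex variable) and let 𝒳 be a Hausdorff topological vector space of holomorphic functions on Ω satisfying (P1)–(P3). Then Ω_max = {w ∈ ℂ : the polynomial z − w is not cyclic in 𝒳} = Ω_env. -/
/-!
A Hausdorff topological vector space `X` of holomorphic functions in one complex
variable on an open set `Ω ⊆ ℂ` satisfying (P1) (polynomials are dense), (P2) (point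
evaluations at points of `Ω` are continuous) and (P3) (the shift operator, and hence
multiplication by any polynomial, is a continuous linear self map).
-/
structure HoloFunSpace1 (Ω : Set ℂ) (X : Type*)
    [AddCommGroup X] [Module ℂ X] [TopologicalSpace X] where
  /-- The realization of elements of `X` as (holomorphic) functions on `Ω`. -/
  toFun : X →ₗ[ℂ] (ℂ → ℂ)
  holo : ∀ F : X, DifferentiableOn ℂ (toFun F) Ω
  inj : ∀ F G : X, Set.EqOn (toFun F) (toFun G) Ω → F = G
  /-- The polynomials, as elements of `X`. -/
  poly : Polynomial ℂ →ₗ[ℂ] X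
  poly_eval : ∀ (p : Polynomial ℂ), ∀ z ∈ Ω, toFun (poly p) z = Polynomial.eval z p
  /-- (P1): polynomials are dense in `X`. -/
  dense_poly : Dense (Set.range fun p : Polynomial ℂ => poly p)
  /-- (P2): point evaluations at points of `Ω` are continuous. -/
  eval_cont : ∀ z ∈ Ω, Continuous fun F : X => toFun F z
  /-- Multiplication by a polynomial, a continuous linear self map of `X`;
  (P3) is the special case of the shift `mul X`. -/
  mul : Polynomial ℂ → X →L[ℂ] X
  mul_eval : ∀ (p : Polynomial ℂ) (F : X), ∀ z ∈ Ω,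
    toFun (mul p F) z = Polynomial.eval z p * toFun F z

namespace HoloFunSpace1

variable {Ω : Set ℂ} {X : Type*} [AddCommGroup X] [Module ℂ X] [TopologicalSpace X]

/-- The maximal domain `Ω_max`: all `w ∈ ℂ` such that evaluation at `w`, defined on
polynomials, extends to a continuous linear functional on `X`. -/
def maxDomain (H : HoloFunSpace1 Ω X) : Set ℂ :=
  {w | ∃ Λ : X →L[ℂ] ℂ, ∀ p : Polynomial ℂ, Λ (H.poly p) = Polynomial.eval w p}

/-- The invariant subspace `S[F]`: the closure of `{p · F : p ∈ 𝒫_1}`. -/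
def invSub (H : HoloFunSpace1 Ω X) (F : X) : Set X :=
  closure (Set.range fun p : Polynomial ℂ => H.mul p F)

/-- `F` is cyclic if `S[F] = X`. -/
def Cyclic (H : HoloFunSpace1 Ω X) (F : X) : Prop := H.invSub F = Set.univ

/-- The joint invariant subspace `S[𝓕]`: the closed linear span of `⋃_{F ∈ 𝓕} S[F]`. -/
def jointInvSub (H : HoloFunSpace1 Ω X) (𝓕 : Set X) : Set X :=
  closure (Submodule.span ℂ (⋃ F ∈ 𝓕, H.invSub F) : Set X)

/-- A family `𝓕` is jointly cyclic if `S[𝓕] = X`. -/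
def JointlyCyclic (H : HoloFunSpace1 Ω X) (𝓕 : Set X) : Prop :=
  H.jointInvSub 𝓕 = Set.univ

/-! ### Auxiliary lemmas -/

open Polynomial in
theorem mul_poly (H : HoloFunSpace1 Ω X) (p q : Polynomial ℂ) :
    H.mul p (H.poly q) = H.poly (p * q) := by
  apply H.inj
  intro z hz
  rw [H.mul_eval p _ z hz, H.poly_eval q z hz, H.poly_eval (p * q) z hz, Polynomial.eval_mul]

/-- Multiplication by polynomials against a fixed `F`, as a linear map in the polynomial. -/
def mulMap (H : HoloFunSpace1 Ω X) (F : X) : Polynomial ℂ →ₗ[ℂ] X where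
  toFun p := H.mul p F
  map_add' p q := by
    apply H.inj
    intro z hz
    rw [map_add]
    simp only [Pi.add_apply, H.mul_eval _ _ z hz, Polynomial.eval_add]
    ring
  map_smul' c p := by
    apply H.inj
    intro z hz
    rw [map_smul]
    simp only [Pi.smul_apply, H.mul_eval _ _ z hz, Polynomial.eval_smul, smul_eq_mul,
      RingHom.id_apply]
    ring

theorem invSub_eq_closure_range (H : HoloFunSpace1 Ω X) (F : X) :
    H.invSub F = closure ((LinearMap.range (H.mulMap F) : Submodule ℂ X) : Set X) := by
  simp only [invSub, LinearMap.coe_range]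
  rfl

/-- If `w ∈ Ω_max` and `p(w) = 0`, then `p` is not cyclic. -/
theorem not_cyclic_of_mem_maxDomain (H : HoloFunSpace1 Ω X) {w : ℂ}
    (hw : w ∈ H.maxDomain) {p : Polynomial ℂ} (hp : Polynomial.eval w p = 0) :
    ¬ H.Cyclic (H.poly p) := by
  obtain ⟨Λ, hΛ⟩ := hw
  intro hcyc
  have hvan : (Set.range fun q : Polynomial ℂ => H.mul q (H.poly p)) ⊆ {x | Λ x = 0} := by
    rintro _ ⟨q, rfl⟩
    simp only [Set.mem_setOf_eq, H.mul_poly, hΛ, Polynomial.eval_mul, hp, mul_zero]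
  have hclosed : IsClosed {x : X | Λ x = 0} := isClosed_eq Λ.continuous continuous_const
  have : H.invSub (H.poly p) ⊆ {x | Λ x = 0} := by
    rw [invSub]
    exact closure_minimal hvan hclosed
  rw [hcyc] at this
  have h1 : Λ (H.poly 1) = 0 := this (Set.mem_univ _)
  rw [hΛ, Polynomial.eval_one] at h1
  exact one_ne_zero h1

/-- The key direction: if `z - w` is not cyclic then `w ∈ Ω_max`. -/
theorem mem_maxDomain_of_not_cyclic [IsTopologicalAddGroup X] [ContinuousSMul ℂ X] [T2Space X]
    (H : HoloFunSpace1 Ω X) {w : ℂ}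
    (hnc : ¬ H.Cyclic (H.poly (Polynomial.X - Polynomial.C w))) : w ∈ H.maxDomain := by
  set F₀ := H.poly (Polynomial.X - Polynomial.C w) with hF₀
  set N : Submodule ℂ X := (LinearMap.range (H.mulMap F₀)).topologicalClosure with hNdef
  have hNclosed : IsClosed (N : Set X) := Submodule.isClosed_topologicalClosure _
  have hNset : (N : Set X) = H.invSub F₀ := by
    rw [hNdef, Submodule.topologicalClosure_coe, H.invSub_eq_closure_range]
  have hmemN : ∀ p : Polynomial ℂ,
      H.poly p - Polynomial.eval w p • H.poly 1 ∈ N := by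
    intro p
    obtain ⟨q, hq⟩ := Polynomial.X_sub_C_dvd_sub_C_eval (a := w) (p := p)
    refine Submodule.le_topologicalClosure _ ⟨q, ?_⟩
    show H.mul q F₀ = _
    rw [hF₀, H.mul_poly, mul_comm, ← hq, map_sub]
    congr 1
    rw [show Polynomial.C (Polynomial.eval w p)
        = Polynomial.eval w p • (1 : Polynomial ℂ) by
      rw [Polynomial.smul_eq_C_mul, mul_one], map_smul]
  have h1N : H.poly 1 ∉ N := by
    intro h1
    apply hnc
    have hall : ∀ p : Polynomial ℂ, H.poly p ∈ N := by
      intro p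
      have := N.add_mem (hmemN p) (N.smul_mem (Polynomial.eval w p) h1)
      simpa using this
    have hsub : (Set.range fun p : Polynomial ℂ => H.poly p) ⊆ (N : Set X) := by
      rintro _ ⟨p, rfl⟩; exact hall p
    have hdense : Dense (N : Set X) := H.dense_poly.mono hsub
    have huniv : (N : Set X) = Set.univ := by
      rw [← hNclosed.closure_eq, hdense.closure_eq]
    rw [Cyclic, ← hNset, huniv]
  -- pass to the quotient
  haveI : IsClosed (N : Set X) := hNclosed
  set v : X ⧸ N := N.mkQ (H.poly 1) with hv
  have hvne : v ≠ 0 := by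
    intro h
    exact h1N ((Submodule.Quotient.mk_eq_zero N).mp (by rwa [hv, Submodule.mkQ_apply] at h))
  have hmk : ∀ p : Polynomial ℂ, N.mkQ (H.poly p) = Polynomial.eval w p • v := by
    intro p
    rw [hv, ← map_smul, ← sub_eq_zero, ← map_sub, Submodule.mkQ_apply]
    exact (Submodule.Quotient.mk_eq_zero N).mpr (hmemN p)
  have hspan : (ℂ ∙ v) = (⊤ : Submodule ℂ (X ⧸ N)) := by
    have hclosedspan : IsClosed ((ℂ ∙ v : Submodule ℂ (X ⧸ N)) : Set (X ⧸ N)) :=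
      Submodule.closed_of_finiteDimensional _
    have hdr : DenseRange (fun p : Polynomial ℂ => N.mkQ (H.poly p)) := by
      have h1 : DenseRange (N.mkQ) :=
        (Submodule.mkQ_surjective N).denseRange
      exact h1.comp H.dense_poly (N.isOpenQuotientMap_mkQ.continuous)
    have hsub : Set.range (fun p : Polynomial ℂ => N.mkQ (H.poly p))
        ⊆ ((ℂ ∙ v : Submodule ℂ (X ⧸ N)) : Set (X ⧸ N)) := by
      rintro _ ⟨p, rfl⟩
      show N.mkQ (H.poly p) ∈ _
      rw [hmk p]
      exact Submodule.smul_mem _ _ (Submodule.mem_span_singleton_self v)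
    have : ((ℂ ∙ v : Submodule ℂ (X ⧸ N)) : Set (X ⧸ N)) = Set.univ := by
      rw [← hclosedspan.closure_eq, (hdr.mono hsub).closure_eq]
    rw [Submodule.eq_top_iff']
    intro x
    exact Set.eq_univ_iff_forall.mp this x
  -- the quotient is one-dimensional; build the evaluation functional
  have hbij : Function.Bijective (LinearMap.toSpanSingleton ℂ (X ⧸ N) v) := by
    constructor
    · rw [← LinearMap.ker_eq_bot]
      exact LinearMap.ker_toSpanSingleton ℂ hvne
    · rw [← LinearMap.range_eq_top, ← LinearMap.span_singleton_eq_range]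
      exact hspan
  let e : ℂ ≃ₗ[ℂ] (X ⧸ N) := LinearEquiv.ofBijective _ hbij
  haveI : FiniteDimensional ℂ (X ⧸ N) := Module.Finite.equiv e
  have hφcont : Continuous (e.symm : (X ⧸ N) →ₗ[ℂ] ℂ) :=
    LinearMap.continuous_of_finiteDimensional _
  refine ⟨⟨(e.symm : (X ⧸ N) →ₗ[ℂ] ℂ) ∘ₗ N.mkQ,
    hφcont.comp (N.isOpenQuotientMap_mkQ.continuous)⟩, ?_⟩
  intro p
  show (e.symm : (X ⧸ N) →ₗ[ℂ] ℂ) (N.mkQ (H.poly p)) = Polynomial.eval w p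
  rw [hmk p]
  have : (Polynomial.eval w p : ℂ) • v = e (Polynomial.eval w p) := by
    simp [e, LinearEquiv.ofBijective_apply, LinearMap.toSpanSingleton_apply]
  rw [this]
  exact e.symm_apply_apply _

end HoloFunSpace1

open HoloFunSpace1 in
/-- In one variable,
`Ω_max = {w ∈ ℂ : z - w is not cyclic} = Ω_env`. -/
theorem maxDomain_eq_not_cyclic_eq_envDomain
    {Ω : Set ℂ} {X : Type*}
    [AddCommGroup X] [Module ℂ X] [TopologicalSpace X]
    [IsTopologicalAddGroup X] [ContinuousSMul ℂ X] [T2Space X]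
    (hΩ : IsOpen Ω) (H : HoloFunSpace1 Ω X) :
    H.maxDomain = {w : ℂ | ¬ H.Cyclic (H.poly (Polynomial.X - Polynomial.C w))} ∧
      H.maxDomain =
        {w : ℂ | ∀ p : Polynomial ℂ, H.Cyclic (H.poly p) → Polynomial.eval w p ≠ 0} := by
  have key : ∀ w : ℂ, w ∈ H.maxDomain ↔
      ¬ H.Cyclic (H.poly (Polynomial.X - Polynomial.C w)) := by
    intro w
    constructor
    · intro hw
      exact H.not_cyclic_of_mem_maxDomain hw (by simp)
    · exact H.mem_maxDomain_of_not_cyclic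
  constructor
  · ext w
    exact key w
  · ext w
    constructor
    · intro hw p hcyc
      intro h0
      exact H.not_cyclic_of_mem_maxDomain hw h0 hcyc
    · intro hw
      rw [key w]
      intro hcyc
      have := hw _ hcyc
      simp at this
end

section
/- Let Ω ⊆ ℂ^d be open and let 𝒳 be a Hausdorff topological vector space of holomorphic functions on Ω satisfying (P1)–(P3). Let 𝒬 ⊆ 𝒫_d be a family of polynomials and ℱ ⊆ 𝒳 a family of functions, and set 𝒬ℱ = {PF : P ∈ 𝒬, F ∈ ℱ}. Then 𝒬ℱ is jointly cyclic in 𝒳 if and only if both 𝒬 and ℱ are jointly cyclic in 𝒳. -/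
namespace HoloFunSpace

variable {d : ℕ} {Ω : Set (Fin d → ℂ)} {X : Type*}
  [AddCommGroup X] [Module ℂ X] [TopologicalSpace X]

lemma mul_mul' (H : HoloFunSpace d Ω X) (P Q : MvPolynomial (Fin d) ℂ) (F : X) :
    H.mul Q (H.mul P F) = H.mul (Q * P) F := by
  apply H.inj
  intro z hz
  rw [H.mul_eval Q (H.mul P F) z hz, H.mul_eval P F z hz, H.mul_eval (Q * P) F z hz, map_mul,
    mul_assoc]

lemma mul_poly_swap (H : HoloFunSpace d Ω X) (P R : MvPolynomial (Fin d) ℂ) :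
    H.mul P (H.poly R) = H.mul R (H.poly P) := by
  apply H.inj
  intro z hz
  rw [H.mul_eval P (H.poly R) z hz, H.mul_eval R (H.poly P) z hz, H.poly_eval R z hz,
    H.poly_eval P z hz, mul_comm]

lemma mul_swap (H : HoloFunSpace d Ω X) (P Q : MvPolynomial (Fin d) ℂ) (F : X) :
    H.mul P (H.mul Q F) = H.mul Q (H.mul P F) := by
  rw [H.mul_mul', H.mul_mul', mul_comm]

/-- Every `mul Q (mul P F)` lies in `S[poly P]`, since `F` is a limit of polynomials. -/
lemma mul_mul_mem_invSub_poly (H : HoloFunSpace d Ω X) (Q P : MvPolynomial (Fin d) ℂ) (F : X) :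
    H.mul Q (H.mul P F) ∈ H.invSub (H.poly P) := by
  rw [H.mul_mul']
  have hF : F ∈ closure (Set.range fun R : MvPolynomial (Fin d) ℂ => H.poly R) :=
    H.dense_poly F
  have hmap : Set.MapsTo (fun G => H.mul (Q * P) G)
      (Set.range fun R : MvPolynomial (Fin d) ℂ => H.poly R)
      (Set.range fun R : MvPolynomial (Fin d) ℂ => H.mul R (H.poly P)) := by
    rintro _ ⟨R, rfl⟩
    refine ⟨Q * R, ?_⟩
    show H.mul (Q * R) (H.poly P) = H.mul (Q * P) (H.poly R)
    rw [← H.mul_mul', ← H.mul_mul', H.mul_poly_swap P R]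
  exact map_mem_closure (H.mul (Q * P)).continuous hF hmap

lemma mul_mem_invSub (H : HoloFunSpace d Ω X) (P : MvPolynomial (Fin d) ℂ) (F : X) {a : X}
    (ha : a ∈ H.invSub F) : H.mul P a ∈ H.invSub (H.mul P F) := by
  have hmap : Set.MapsTo (fun G => H.mul P G)
      (Set.range fun Q : MvPolynomial (Fin d) ℂ => H.mul Q F)
      (Set.range fun Q : MvPolynomial (Fin d) ℂ => H.mul Q (H.mul P F)) := by
    rintro _ ⟨Q, rfl⟩
    exact ⟨Q, (H.mul_swap P Q F).symm⟩
  exact map_mem_closure (H.mul P).continuous ha hmap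

lemma invSub_mul_subset (H : HoloFunSpace d Ω X) (P : MvPolynomial (Fin d) ℂ) (F : X) :
    H.invSub (H.mul P F) ⊆ H.invSub F := by
  refine closure_minimal ?_ isClosed_closure
  rintro _ ⟨Q, rfl⟩
  show H.mul Q (H.mul P F) ∈ H.invSub F
  rw [H.mul_mul']
  exact subset_closure ⟨Q * P, rfl⟩

lemma invSub_mul_subset_poly (H : HoloFunSpace d Ω X) (P : MvPolynomial (Fin d) ℂ) (F : X) :
    H.invSub (H.mul P F) ⊆ H.invSub (H.poly P) := by
  refine closure_minimal ?_ isClosed_closure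
  rintro _ ⟨Q, rfl⟩
  exact H.mul_mul_mem_invSub_poly Q P F

variable [IsTopologicalAddGroup X] [ContinuousSMul ℂ X]

/-- The joint invariant subspace as a closed submodule. -/
def jointSubmodule (H : HoloFunSpace d Ω X) (𝓕 : Set X) : Submodule ℂ X :=
  (Submodule.span ℂ (⋃ F ∈ 𝓕, H.invSub F)).topologicalClosure

lemma jointInvSub_eq_coe (H : HoloFunSpace d Ω X) (𝓕 : Set X) :
    H.jointInvSub 𝓕 = (H.jointSubmodule 𝓕 : Set X) :=
  (Submodule.topologicalClosure_coe _).symm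

lemma invSub_subset_jointInvSub (H : HoloFunSpace d Ω X) {𝓕 : Set X} {F : X} (hF : F ∈ 𝓕) :
    H.invSub F ⊆ H.jointInvSub 𝓕 := by
  refine Set.Subset.trans ?_ (Set.Subset.trans Submodule.subset_span subset_closure)
  exact Set.subset_biUnion_of_mem hF

lemma jointInvSub_mono (H : HoloFunSpace d Ω X) {𝒢 𝓕 : Set X}
    (h : ∀ G ∈ 𝒢, H.invSub G ⊆ H.jointInvSub 𝓕) :
    H.jointInvSub 𝒢 ⊆ H.jointInvSub 𝓕 := by
  rw [H.jointInvSub_eq_coe 𝓕]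
  refine closure_minimal ?_ (Submodule.isClosed_topologicalClosure _)
  refine Submodule.span_le.mpr (Set.iUnion₂_subset fun G hG => ?_)
  rw [← H.jointInvSub_eq_coe 𝓕]
  exact h G hG

end HoloFunSpace

open HoloFunSpace in
/-- For a family of polynomials `𝒬 ⊆ 𝒫_d` and a family `𝓕 ⊆ X`,
the family `𝒬𝓕 = {P·F : P ∈ 𝒬, F ∈ 𝓕}` is jointly cyclic if and only if both `𝒬`
and `𝓕` are jointly cyclic. -/
theorem jointlyCyclic_mul_iff
    {d : ℕ} {Ω : Set (Fin d → ℂ)} {X : Type*}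
    [AddCommGroup X] [Module ℂ X] [TopologicalSpace X]
    [IsTopologicalAddGroup X] [ContinuousSMul ℂ X] [T2Space X]
    (hΩ : IsOpen Ω) (H : HoloFunSpace d Ω X)
    (𝒬 : Set (MvPolynomial (Fin d) ℂ)) (𝓕 : Set X) :
    H.JointlyCyclic {G : X | ∃ P ∈ 𝒬, ∃ F ∈ 𝓕, G = H.mul P F} ↔
      (H.JointlyCyclic (H.poly '' 𝒬) ∧ H.JointlyCyclic 𝓕) := by
  set 𝒢 : Set X := {G : X | ∃ P ∈ 𝒬, ∃ F ∈ 𝓕, G = H.mul P F} with h𝒢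
  constructor
  · intro h
    constructor
    · -- 𝒬 is jointly cyclic
      refine Set.eq_univ_of_univ_subset ?_
      rw [← h]
      refine H.jointInvSub_mono ?_
      rintro G ⟨P, hP, F, hF, rfl⟩
      exact (H.invSub_mul_subset_poly P F).trans
        (H.invSub_subset_jointInvSub ⟨P, hP, rfl⟩)
    · -- 𝓕 is jointly cyclic
      refine Set.eq_univ_of_univ_subset ?_
      rw [← h]
      refine H.jointInvSub_mono ?_
      rintro G ⟨P, hP, F, hF, rfl⟩
      exact (H.invSub_mul_subset P F).trans (H.invSub_subset_jointInvSub hF)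
  · rintro ⟨hQ, hF⟩
    set M : Submodule ℂ X := H.jointSubmodule 𝒢 with hM
    have hMclosed : IsClosed (M : Set X) := Submodule.isClosed_topologicalClosure _
    -- Step A : for P ∈ 𝒬, mul P maps all of X into M
    have stepA : ∀ P ∈ 𝒬, ∀ x : X, H.mul P x ∈ M := by
      intro P hP x
      have hx : x ∈ closure (Submodule.span ℂ (⋃ F ∈ 𝓕, H.invSub F) : Set X) := by
        have : x ∈ H.jointInvSub 𝓕 := by rw [hF]; trivial
        exact this
      have himg : (H.mul P) '' (Submodule.span ℂ (⋃ F ∈ 𝓕, H.invSub F) : Set X)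
          ⊆ (M : Set X) := by
        have hAM : (H.mul P) '' (⋃ F ∈ 𝓕, H.invSub F) ⊆ (M : Set X) := by
          rintro _ ⟨a, ha, rfl⟩
          obtain ⟨s, ⟨F, rfl⟩, hs⟩ := ha
          obtain ⟨t, ⟨hF', rfl⟩, ha'⟩ := hs
          have h1 : H.mul P a ∈ H.invSub (H.mul P F) := H.mul_mem_invSub P F ha'
          have h2 : H.invSub (H.mul P F) ⊆ (M : Set X) := by
            rw [← H.jointInvSub_eq_coe]
            exact H.invSub_subset_jointInvSub ⟨P, hP, F, hF', rfl⟩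
          exact h2 h1
        intro y hy
        obtain ⟨a, ha, rfl⟩ := hy
        have hmem : (H.mul P : X →ₗ[ℂ] X) a ∈ (Submodule.span ℂ (⋃ F ∈ 𝓕, H.invSub F)).map
            (H.mul P : X →ₗ[ℂ] X) := Submodule.mem_map_of_mem ha
        have hle : (Submodule.span ℂ (⋃ F ∈ 𝓕, H.invSub F)).map
            (H.mul P : X →ₗ[ℂ] X) ≤ M := by
          rw [Submodule.map_span]
          exact Submodule.span_le.mpr hAM
        exact hle hmem
      have := map_mem_closure (H.mul P).continuous hx
        (fun a ha => himg (Set.mem_image_of_mem _ ha))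
      exact hMclosed.closure_subset this
    -- Step B : for P ∈ 𝒬, S[poly P] ⊆ M
    have stepB : ∀ P ∈ 𝒬, H.invSub (H.poly P) ⊆ (M : Set X) := by
      intro P hP
      refine closure_minimal ?_ hMclosed
      rintro _ ⟨R, rfl⟩
      show H.mul R (H.poly P) ∈ (M : Set X)
      rw [← H.mul_poly_swap P R]
      exact stepA P hP (H.poly R)
    -- conclude
    refine Set.eq_univ_of_univ_subset ?_
    rw [← hQ, H.jointInvSub_eq_coe 𝒢]
    refine closure_minimal ?_ hMclosed
    refine Submodule.span_le.mpr (Set.iUnion₂_subset fun G hG => ?_)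
    obtain ⟨P, hP, rfl⟩ := hG
    exact stepB P hP
end

section
/- Let Ω ⊆ ℂ^d be open and let 𝒳 be a Hausdorff topological vector space of holomorphic functions on Ω satisfying (P1)–(P3). Let ℱ ⊆ 𝒫_d be a family of polynomials such that V(𝔦_ℱ) is finite, where I(ℱ) = 𝔤(ℱ)·𝔦_ℱ is the factorization of the ideal generated by ℱ through the greatest common divisor 𝔤(ℱ). Then ℱ is jointly cyclic in 𝒳 if and only if V(ℱ) ∩ Ω_max = ∅ and 𝔤(ℱ) is cyclic in 𝒳. -/
set_option linter.unusedSectionVars false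

universe u

theorem my_exists_common_eigenvector (n : ℕ) :
    ∀ {V : Type u} [AddCommGroup V] [Module ℂ V] [FiniteDimensional ℂ V] [Nontrivial V]
      (T : Fin n → Module.End ℂ V), (∀ i j, Commute (T i) (T j)) →
      ∃ v : V, v ≠ 0 ∧ ∃ w : Fin n → ℂ, ∀ i, T i v = w i • v := by
  induction n with
  | zero =>
      intro V _ _ _ _ T _
      obtain ⟨v, hv⟩ := exists_ne (0 : V)
      exact ⟨v, hv, fun i => i.elim0, fun i => i.elim0⟩
  | succ n ih =>
      intro V _ _ _ _ T hT
      obtain ⟨μ, hμ⟩ := Module.End.exists_eigenvalue (T (Fin.last n))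
      set E := Module.End.eigenspace (T (Fin.last n)) μ with hE
      haveI : Nontrivial E := Submodule.nontrivial_iff_ne_bot.mpr hμ
      have hmaps : ∀ i : Fin (n+1), ∀ x ∈ E, T i x ∈ E := by
        intro i x hx
        rw [Module.End.mem_eigenspace_iff] at hx ⊢
        have := congrFun (congrArg DFunLike.coe (hT (Fin.last n) i)) x
        simp only [Module.End.mul_apply] at this
        rw [this, hx, map_smul]
      set T' : Fin n → Module.End ℂ E :=
        fun i => LinearMap.restrict (T i.castSucc) (fun x hx => hmaps i.castSucc x hx) with hT'
      have hT'comm : ∀ i j, Commute (T' i) (T' j) := by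
        intro i j
        apply LinearMap.ext
        rintro ⟨x, hx⟩
        apply Subtype.ext
        simp only [Module.End.mul_apply, hT', LinearMap.restrict_apply]
        exact congrFun (congrArg DFunLike.coe (hT i.castSucc j.castSucc)) x
      obtain ⟨v, hv0, w, hw⟩ := ih T' hT'comm
      refine ⟨(v : V), by simpa using hv0, Fin.snoc w μ, ?_⟩
      intro i
      refine Fin.lastCases ?_ ?_ i
      · have hvE : (v : V) ∈ E := v.2
        rw [Module.End.mem_eigenspace_iff] at hvE
        simpa [Fin.snoc_last] using hvE
      · intro j
        have := congrArg (Subtype.val) (hw j)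
        simp only [hT', SetLike.val_smul] at this
        rw [LinearMap.restrict_apply] at this
        simpa [Fin.snoc_castSucc] using this

open MvPolynomial in
theorem my_finite_quotient {d : ℕ} (𝔦 : Ideal (MvPolynomial (Fin d) ℂ))
    (hV𝔦 : {w : Fin d → ℂ | ∀ P ∈ 𝔦, MvPolynomial.eval w P = 0}.Finite) :
    Module.Finite ℂ (MvPolynomial (Fin d) ℂ ⧸ 𝔦) := by
  classical
  set s := hV𝔦.toFinset with hs
  have hrad : ∀ j : Fin d,
      (∏ w ∈ s, (X j - C (w j)) : MvPolynomial (Fin d) ℂ) ∈ 𝔦.radical := by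
    intro j
    rw [← vanishingIdeal_zeroLocus_eq_radical (K := ℂ)]
    intro x hx
    have hxs : x ∈ s := by
      rw [hs, Set.Finite.mem_toFinset]
      exact fun P hP => hx P hP
    rw [map_prod]
    refine Finset.prod_eq_zero hxs ?_
    simp
  have hpow : ∀ j : Fin d, ∃ n : ℕ,
      ((∏ w ∈ s, (X j - C (w j)) : MvPolynomial (Fin d) ℂ)) ^ n ∈ 𝔦 :=
    fun j => hrad j
  choose n hn using hpow
  set mk := Ideal.Quotient.mkₐ ℂ 𝔦 with hmk
  have hint : ∀ j : Fin d, IsIntegral ℂ (mk (X j)) := by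
    intro j
    refine ⟨(∏ w ∈ s, (Polynomial.X - Polynomial.C (w j))) ^ n j, ?_, ?_⟩
    · exact (Polynomial.monic_prod_of_monic _ _ fun w _ => Polynomial.monic_X_sub_C _).pow _
    · have h1 : Polynomial.aeval (X j : MvPolynomial (Fin d) ℂ)
          ((∏ w ∈ s, (Polynomial.X - Polynomial.C (w j))) ^ n j)
          = (∏ w ∈ s, (X j - C (w j))) ^ n j := by
        rw [map_pow, map_prod]
        congr 1
        refine Finset.prod_congr rfl fun w _ => ?_
        rw [map_sub, Polynomial.aeval_X, Polynomial.aeval_C]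
        rfl
      have h2 := Polynomial.aeval_algHom_apply mk (X j : MvPolynomial (Fin d) ℂ)
          ((∏ w ∈ s, (Polynomial.X - Polynomial.C (w j))) ^ n j)
      rw [← Polynomial.aeval_def, h2, h1, hmk, Ideal.Quotient.mkₐ_eq_mk,
        Ideal.Quotient.eq_zero_iff_mem]
      exact hn j
  have hadj : Algebra.adjoin ℂ (Set.range fun j : Fin d => mk (X j)) = ⊤ := by
    have : (Set.range fun j : Fin d => mk (X j)) = mk '' (Set.range X) := by
      rw [← Set.range_comp]; rfl
    rw [this, ← AlgHom.map_adjoin, adjoin_range_X, Algebra.map_top,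
      (AlgHom.range_eq_top mk).mpr (Ideal.Quotient.mkₐ_surjective ℂ 𝔦)]
  have hfg : (Algebra.adjoin ℂ (Set.range fun j : Fin d => mk (X j))).toSubmodule.FG :=
    fg_adjoin_of_finite (Set.finite_range _) (by rintro x ⟨j, rfl⟩; exact hint j)
  rw [hadj] at hfg
  exact ⟨by rwa [Algebra.top_toSubmodule] at hfg⟩

/-- A finite-codimension complement for an ideal with finite-dimensional quotient. -/
theorem my_exists_finset_sup_eq_top {d : ℕ} (𝔦 : Ideal (MvPolynomial (Fin d) ℂ))
    (hfin : Module.Finite ℂ (MvPolynomial (Fin d) ℂ ⧸ 𝔦)) :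
    ∃ E : Finset (MvPolynomial (Fin d) ℂ),
      Submodule.span ℂ (E : Set (MvPolynomial (Fin d) ℂ)) ⊔
        Submodule.restrictScalars ℂ 𝔦 = ⊤ := by
  classical
  obtain ⟨s, hs⟩ := hfin.fg_top
  set mkl : MvPolynomial (Fin d) ℂ →ₗ[ℂ] MvPolynomial (Fin d) ℂ ⧸ 𝔦 :=
    (Ideal.Quotient.mkₐ ℂ 𝔦).toLinearMap with hmkl
  have hsurj : Function.Surjective mkl := Ideal.Quotient.mkₐ_surjective ℂ 𝔦
  choose lift hlift using hsurj
  refine ⟨s.image lift, ?_⟩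
  rw [eq_top_iff]
  rintro Q -
  have himg : mkl '' ((s.image lift : Finset _) : Set (MvPolynomial (Fin d) ℂ))
      = (s : Set (MvPolynomial (Fin d) ℂ ⧸ 𝔦)) := by
    ext y
    simp only [Finset.coe_image, Set.mem_image]
    constructor
    · rintro ⟨x, ⟨z, hz, rfl⟩, rfl⟩
      rw [hlift]; exact hz
    · intro hy
      exact ⟨lift y, ⟨y, hy, rfl⟩, hlift y⟩
  have hQ : mkl Q ∈ Submodule.span ℂ (mkl '' ((s.image lift : Finset _) : Set _)) := by
    rw [himg, hs]; trivial
  rw [← Submodule.map_span, Submodule.mem_map] at hQ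
  obtain ⟨e, he, heq⟩ := hQ
  have hker : Q - e ∈ 𝔦 := by
    have : mkl (Q - e) = 0 := by rw [map_sub, heq, sub_self]
    rwa [hmkl, AlgHom.toLinearMap_apply, Ideal.Quotient.mkₐ_eq_mk,
      Ideal.Quotient.eq_zero_iff_mem] at this
  have : Q = e + (Q - e) := by ring
  rw [this]
  exact Submodule.add_mem_sup he hker

namespace HoloFunSpace

variable {d : ℕ} {Ω : Set (Fin d → ℂ)} {X : Type*}
  [AddCommGroup X] [Module ℂ X] [TopologicalSpace X]

theorem my_mul_poly (H : HoloFunSpace d Ω X) (P Q : MvPolynomial (Fin d) ℂ) :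
    H.mul P (H.poly Q) = H.poly (P * Q) := by
  apply H.inj; intro z hz
  rw [H.mul_eval P _ z hz, H.poly_eval Q z hz, H.poly_eval _ z hz, map_mul]

theorem my_mul_one (H : HoloFunSpace d Ω X) (F : X) : H.mul 1 F = F := by
  apply H.inj; intro z hz
  rw [H.mul_eval 1 F z hz, map_one, one_mul]

theorem my_mul_mul (H : HoloFunSpace d Ω X) (P Q : MvPolynomial (Fin d) ℂ) (F : X) :
    H.mul (P * Q) F = H.mul P (H.mul Q F) := by
  apply H.inj; intro z hz
  rw [H.mul_eval _ _ z hz, H.mul_eval _ _ z hz, H.mul_eval _ _ z hz, map_mul]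
  ring

theorem my_mul_add (H : HoloFunSpace d Ω X) (P Q : MvPolynomial (Fin d) ℂ) (F : X) :
    H.mul (P + Q) F = H.mul P F + H.mul Q F := by
  apply H.inj; intro z hz
  have h : H.toFun (H.mul P F + H.mul Q F) z
      = H.toFun (H.mul P F) z + H.toFun (H.mul Q F) z := by
    rw [map_add]; rfl
  rw [h, H.mul_eval _ _ z hz, H.mul_eval _ _ z hz, H.mul_eval _ _ z hz, map_add]
  ring

theorem my_mul_C (H : HoloFunSpace d Ω X) (a : ℂ) (F : X) :
    H.mul (MvPolynomial.C a) F = a • F := by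
  apply H.inj; intro z hz
  have h : H.toFun (a • F) z = a * H.toFun F z := by rw [map_smul]; rfl
  rw [h, H.mul_eval _ _ z hz, MvPolynomial.eval_C]

theorem my_mul_smul (H : HoloFunSpace d Ω X) (a : ℂ) (P : MvPolynomial (Fin d) ℂ) (F : X) :
    H.mul (a • P) F = a • H.mul P F := by
  rw [MvPolynomial.smul_eq_C_mul, H.my_mul_mul, H.my_mul_C]

/-- Multiplication against a fixed `F`, as a linear map in the polynomial. -/
def mulL (H : HoloFunSpace d Ω X) (F : X) : MvPolynomial (Fin d) ℂ →ₗ[ℂ] X where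
  toFun P := H.mul P F
  map_add' P Q := H.my_mul_add P Q F
  map_smul' a P := H.my_mul_smul a P F

variable [IsTopologicalAddGroup X] [ContinuousSMul ℂ X]

theorem my_invSub_eq (H : HoloFunSpace d Ω X) (F : X) :
    H.invSub F = ((LinearMap.range (H.mulL F)).topologicalClosure : Set X) := by
  rw [Submodule.topologicalClosure_coe]
  rfl

/-- The joint invariant subspace, as a submodule. -/
def jointSub (H : HoloFunSpace d Ω X) (𝓕 : Set X) : Submodule ℂ X :=
  (Submodule.span ℂ (⋃ F ∈ 𝓕, H.invSub F)).topologicalClosure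

theorem my_coe_jointSub (H : HoloFunSpace d Ω X) (𝓕 : Set X) :
    (H.jointSub 𝓕 : Set X) = H.jointInvSub 𝓕 :=
  Submodule.topologicalClosure_coe _

theorem my_jointlyCyclic_iff (H : HoloFunSpace d Ω X) (𝓕 : Set X) :
    H.JointlyCyclic 𝓕 ↔ H.jointSub 𝓕 = ⊤ := by
  unfold JointlyCyclic
  rw [← H.my_coe_jointSub]
  constructor
  · intro h
    refine Submodule.eq_top_iff'.mpr fun x => ?_
    rw [← SetLike.mem_coe, h]; trivial
  · intro h
    rw [h]; exact Submodule.top_coe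

theorem my_mul_mem_invSub (H : HoloFunSpace d Ω X) (Q : MvPolynomial (Fin d) ℂ) (F : X)
    {x : X} (hx : x ∈ H.invSub F) : H.mul Q x ∈ H.invSub F := by
  refine map_mem_closure (H.mul Q).continuous hx ?_
  rintro y ⟨P, rfl⟩
  refine ⟨Q * P, ?_⟩
  show H.mul (Q * P) F = H.mul Q (H.mul P F)
  exact H.my_mul_mul Q P F

theorem my_mul_mem_jointSub (H : HoloFunSpace d Ω X) (Q : MvPolynomial (Fin d) ℂ)
    {𝓕 : Set X} {x : X} (hx : x ∈ H.jointSub 𝓕) : H.mul Q x ∈ H.jointSub 𝓕 := by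
  unfold jointSub at hx ⊢
  rw [← SetLike.mem_coe, Submodule.topologicalClosure_coe] at hx ⊢
  refine map_mem_closure (H.mul Q).continuous hx ?_
  intro y hy
  rw [SetLike.mem_coe] at hy ⊢
  refine Submodule.span_induction ?_ ?_ ?_ ?_ hy
  · intro z hz
    obtain ⟨G, hG, hzG⟩ := Set.mem_iUnion₂.mp hz
    exact Submodule.subset_span <| Set.mem_iUnion₂.mpr ⟨G, hG, H.my_mul_mem_invSub Q G hzG⟩
  · rw [map_zero]; exact Submodule.zero_mem _
  · intro a b _ _ ha hb; rw [map_add]; exact Submodule.add_mem _ ha hb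
  · intro a b _ hb; rw [map_smul]; exact Submodule.smul_mem _ a hb

theorem my_poly_mem_jointSub (H : HoloFunSpace d Ω X) {ℱ : Set (MvPolynomial (Fin d) ℂ)}
    {R : MvPolynomial (Fin d) ℂ} (hR : R ∈ Ideal.span ℱ) :
    H.poly R ∈ H.jointSub (H.poly '' ℱ) := by
  refine Submodule.span_induction ?_ ?_ ?_ ?_ hR
  · intro P hP
    refine Submodule.le_topologicalClosure _ <| Submodule.subset_span <|
      Set.mem_iUnion₂.mpr ⟨H.poly P, ⟨P, hP, rfl⟩, ?_⟩
    exact subset_closure ⟨1, H.my_mul_one _⟩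
  · rw [map_zero]; exact Submodule.zero_mem _
  · intro a b _ _ ha hb; rw [map_add]; exact Submodule.add_mem _ ha hb
  · intro a b _ hb
    rw [smul_eq_mul, ← H.my_mul_poly]
    exact H.my_mul_mem_jointSub a hb

end HoloFunSpace

open HoloFunSpace in
/-- Let `ℱ ⊆ 𝒫_d` be a family of polynomials, `g = 𝔤(ℱ)` a greatest
common divisor of `ℱ`, and `𝔦 = 𝔦_ℱ` the ideal with `I(ℱ) = g · 𝔦` and `𝔤(𝔦) = 1`.
If the vanishing set `V(𝔦)` is finite, then `ℱ` is jointly cyclic if and only if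
`V(ℱ) ∩ Ω_max = ∅` and `g` is cyclic. -/
theorem jointlyCyclic_iff_of_finite_vanishing
    {d : ℕ} {Ω : Set (Fin d → ℂ)} {X : Type*}
    [AddCommGroup X] [Module ℂ X] [TopologicalSpace X]
    [IsTopologicalAddGroup X] [ContinuousSMul ℂ X] [T2Space X]
    (hΩ : IsOpen Ω) (H : HoloFunSpace d Ω X)
    (ℱ : Set (MvPolynomial (Fin d) ℂ)) (g : MvPolynomial (Fin d) ℂ)
    (hg_dvd : ∀ P ∈ ℱ, g ∣ P)
    (hg_gcd : ∀ q : MvPolynomial (Fin d) ℂ, (∀ P ∈ ℱ, q ∣ P) → q ∣ g)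
    (𝔦 : Ideal (MvPolynomial (Fin d) ℂ))
    (h𝔦 : Ideal.span ℱ = Ideal.span {g} * 𝔦)
    (h𝔦gcd : ∀ q : MvPolynomial (Fin d) ℂ, (∀ P ∈ 𝔦, q ∣ P) → IsUnit q)
    (hV𝔦 : {w : Fin d → ℂ | ∀ P ∈ 𝔦, MvPolynomial.eval w P = 0}.Finite) :
    H.JointlyCyclic (H.poly '' ℱ) ↔
      ({w : Fin d → ℂ | ∀ P ∈ ℱ, MvPolynomial.eval w P = 0} ∩ H.maxDomain = ∅ ∧
        H.Cyclic (H.poly g)) := by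
  classical
  constructor
  · -- forward direction
    intro hJC
    constructor
    · -- the vanishing set misses the maximal domain
      rw [Set.eq_empty_iff_forall_notMem]
      rintro w ⟨hw1, Λ, hΛ⟩
      have hvan : ∀ F ∈ H.jointInvSub (H.poly '' ℱ), Λ F = 0 := by
        intro F hF
        have hclosed : IsClosed {F : X | Λ F = 0} :=
          isClosed_eq Λ.continuous continuous_const
        have hU : ((Submodule.span ℂ (⋃ G ∈ H.poly '' ℱ, H.invSub G)) : Set X)
            ⊆ {F : X | Λ F = 0} := by
          intro x hx
          rw [SetLike.mem_coe] at hx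
          refine Submodule.span_induction ?_ ?_ ?_ ?_ hx
          · intro y hy
            obtain ⟨G, hG, hyG⟩ := Set.mem_iUnion₂.mp hy
            obtain ⟨P, hP, rfl⟩ := hG
            have hsub : Set.range (fun Q : MvPolynomial (Fin d) ℂ => H.mul Q (H.poly P))
                ⊆ {F : X | Λ F = 0} := by
              rintro z ⟨Q, rfl⟩
              show Λ (H.mul Q (H.poly P)) = 0
              rw [H.my_mul_poly, hΛ, map_mul, hw1 P hP, mul_zero]
            exact hclosed.closure_subset_iff.mpr hsub hyG
          · exact map_zero Λ
          · intro a b _ _ ha hb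
            show Λ (a + b) = 0
            rw [map_add, ha, hb, add_zero]
          · intro a b _ hb
            show Λ (a • b) = 0
            rw [map_smul, hb, smul_zero]
        exact hclosed.closure_subset_iff.mpr hU hF
      have h1 : Λ (H.poly 1) = 0 := hvan _ (by rw [hJC]; trivial)
      rw [hΛ, map_one] at h1
      exact one_ne_zero h1
    · -- `g` is cyclic
      unfold HoloFunSpace.Cyclic
      rw [H.my_invSub_eq]
      set K := (LinearMap.range (H.mulL (H.poly g))).topologicalClosure with hK
      have hKclosed : IsClosed (K : Set X) := Submodule.isClosed_topologicalClosure _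
      have hJK : H.jointInvSub (H.poly '' ℱ) ⊆ (K : Set X) := by
        refine closure_minimal ?_ hKclosed
        intro x hx
        rw [SetLike.mem_coe] at hx
        rw [SetLike.mem_coe]
        refine Submodule.span_induction ?_ (Submodule.zero_mem _)
          (fun a b _ _ ha hb => Submodule.add_mem _ ha hb)
          (fun a b _ hb => Submodule.smul_mem _ a hb) hx
        intro y hy
        obtain ⟨G, hG, hyG⟩ := Set.mem_iUnion₂.mp hy
        obtain ⟨P, hP, rfl⟩ := hG
        have hsub : Set.range (fun Q : MvPolynomial (Fin d) ℂ => H.mul Q (H.poly P))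
            ⊆ (K : Set X) := by
          rintro z ⟨Q, rfl⟩
          obtain ⟨r, hr⟩ := hg_dvd P hP
          refine Submodule.le_topologicalClosure _ ?_
          refine ⟨Q * r, ?_⟩
          show H.mul (Q * r) (H.poly g) = H.mul Q (H.poly P)
          rw [H.my_mul_poly, H.my_mul_poly, hr]
          ring_nf
        exact hKclosed.closure_subset_iff.mpr hsub hyG
      have : (K : Set X) = Set.univ :=
        Set.eq_univ_of_univ_subset (hJC ▸ hJK)
      exact this
  · -- reverse direction
    rintro ⟨hempty, hcyc⟩
    haveI hfin : Module.Finite ℂ (MvPolynomial (Fin d) ℂ ⧸ 𝔦) := my_finite_quotient 𝔦 hV𝔦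
    obtain ⟨E, hE⟩ := my_exists_finset_sup_eq_top 𝔦 hfin
    set S₀ : Set X :=
      H.poly '' ((fun s => g * s) '' (𝔦 : Set (MvPolynomial (Fin d) ℂ))) with hS₀
    set M : Submodule ℂ X := (Submodule.span ℂ S₀).topologicalClosure with hMdef
    have hMclosed : IsClosed (M : Set X) := Submodule.isClosed_topologicalClosure _
    -- invariance of M under multiplication
    have hmulM : ∀ Q : MvPolynomial (Fin d) ℂ, ∀ x ∈ M, H.mul Q x ∈ M := by
      intro Q x hx
      rw [hMdef, ← SetLike.mem_coe, Submodule.topologicalClosure_coe] at hx ⊢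
      refine map_mem_closure (H.mul Q).continuous hx ?_
      intro y hy
      rw [SetLike.mem_coe] at hy ⊢
      refine Submodule.span_induction ?_ ?_ ?_ ?_ hy
      · rintro z ⟨u, ⟨s, hs, rfl⟩, rfl⟩
        refine Submodule.subset_span ⟨g * (s * Q), ⟨s * Q, 𝔦.mul_mem_right Q hs, rfl⟩, ?_⟩
        rw [H.my_mul_poly]
        congr 1
        ring
      · rw [map_zero]; exact Submodule.zero_mem _
      · intro a b _ _ ha hb; rw [map_add]; exact Submodule.add_mem _ ha hb
      · intro a b _ hb; rw [map_smul]; exact Submodule.smul_mem _ a hb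
    -- the finite-dimensional complement
    set W : Submodule ℂ X :=
      Submodule.span ℂ (H.poly '' ((fun e => g * e) ''
        (E : Set (MvPolynomial (Fin d) ℂ)))) with hWdef
    have hQg : ∀ Q : MvPolynomial (Fin d) ℂ, H.mul Q (H.poly g) ∈ M ⊔ W := by
      intro Q
      have hQtop : Q ∈ Submodule.span ℂ (E : Set (MvPolynomial (Fin d) ℂ)) ⊔
          Submodule.restrictScalars ℂ 𝔦 := by rw [hE]; trivial
      obtain ⟨e, he, s, hs, hQes⟩ := Submodule.mem_sup.mp hQtop
      have hs' : s ∈ 𝔦 := hs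
      rw [H.my_mul_poly, ← hQes]
      have hsplit : (e + s) * g = g * e + g * s := by ring
      rw [hsplit, map_add]
      refine Submodule.add_mem _ ?_ ?_
      · refine Submodule.mem_sup_right ?_
        have hmem : H.poly (g * e) ∈ Submodule.span ℂ
            ((H.poly ∘ₗ LinearMap.mulLeft ℂ g) '' (E : Set (MvPolynomial (Fin d) ℂ))) := by
          rw [← Submodule.map_span]
          exact Submodule.mem_map_of_mem he
        have himg : (H.poly ∘ₗ LinearMap.mulLeft ℂ g) '' (E : Set (MvPolynomial (Fin d) ℂ))
            = H.poly '' ((fun e => g * e) '' (E : Set (MvPolynomial (Fin d) ℂ))) := by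
          rw [← Set.image_comp]
          rfl
        rw [himg] at hmem
        exact hmem
      · refine Submodule.mem_sup_left ?_
        exact Submodule.le_topologicalClosure _
          (Submodule.subset_span ⟨g * s, ⟨s, hs', rfl⟩, rfl⟩)
    -- quotient space instances
    haveI : IsClosed (M : Set X) := hMclosed
    haveI hfdW' : FiniteDimensional ℂ ↥(Submodule.map M.mkQ W) := by
      rw [hWdef, Submodule.map_span]
      exact FiniteDimensional.span_of_finite ℂ (((E.finite_toSet.image _).image _).image _)
    have hcontmk : Continuous (M.mkQ) := (Submodule.isOpenQuotientMap_mkQ M).continuous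
    have hW'closed : IsClosed ((Submodule.map M.mkQ W : Submodule ℂ (X ⧸ M)) : Set (X ⧸ M)) :=
      Submodule.closed_of_finiteDimensional _
    have hNclosed : IsClosed ((M ⊔ W : Submodule ℂ X) : Set X) := by
      have hNeq : (M ⊔ W : Submodule ℂ X) = Submodule.comap M.mkQ (Submodule.map M.mkQ W) := by
        rw [Submodule.comap_map_eq, Submodule.ker_mkQ, sup_comm]
      rw [hNeq]
      exact hW'closed.preimage hcontmk
    have hNtop : M ⊔ W = ⊤ := by
      rw [eq_top_iff]
      rintro x -
      have hx : x ∈ closure (Set.range fun P : MvPolynomial (Fin d) ℂ =>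
          H.mul P (H.poly g)) := by
        have hc : H.invSub (H.poly g) = Set.univ := hcyc
        unfold HoloFunSpace.invSub at hc
        rw [hc]; trivial
      rw [← SetLike.mem_coe]
      refine closure_minimal ?_ hNclosed hx
      rintro y ⟨Q, rfl⟩
      exact hQg Q
    -- M is everything
    have hMtop : M = ⊤ := by
      by_contra hM'
      haveI : Nontrivial (X ⧸ M) :=
        (Submodule.Quotient.nontrivial_iff (p := M)).mpr hM'
      haveI hfdV : FiniteDimensional ℂ (X ⧸ M) := by
        have h7 : Submodule.map M.mkQ W = (⊤ : Submodule ℂ (X ⧸ M)) := by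
          have h8 : Submodule.map M.mkQ M = ⊥ := by
            rw [eq_bot_iff]
            rintro y ⟨x, hx, rfl⟩
            rw [Submodule.mem_bot, Submodule.mkQ_apply, Submodule.Quotient.mk_eq_zero]
            exact hx
          rw [← Submodule.range_mkQ M, ← Submodule.map_top, ← hNtop, Submodule.map_sup, h8,
            bot_sup_eq]
        haveI : FiniteDimensional ℂ ↥(⊤ : Submodule ℂ (X ⧸ M)) := h7 ▸ hfdW'
        exact Submodule.topEquiv.finiteDimensional
      -- the induced shift operators
      have hle : ∀ j : Fin d,
          M ≤ Submodule.comap (H.mul (MvPolynomial.X j)).toLinearMap M :=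
        fun j x hx => hmulM (MvPolynomial.X j) x hx
      set T : Fin d → Module.End ℂ (X ⧸ M) := fun j =>
        Submodule.mapQ M M (H.mul (MvPolynomial.X j)).toLinearMap (hle j) with hTdef
      have hTmk : ∀ (j : Fin d) (F : X),
          T j (M.mkQ F) = M.mkQ (H.mul (MvPolynomial.X j) F) := by
        intro j F
        rw [hTdef]
        rw [Submodule.mkQ_apply, Submodule.mapQ_apply, Submodule.mkQ_apply]
        rfl
      have hTcomm : ∀ i j, Commute (T i) (T j) := by
        intro i j
        apply Submodule.linearMap_qext
        apply LinearMap.ext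
        intro x
        show (T i) ((T j) (M.mkQ x)) = (T j) ((T i) (M.mkQ x))
        rw [hTmk, hTmk, hTmk, hTmk, ← H.my_mul_mul, ← H.my_mul_mul, mul_comm]
      -- common eigenvector for the dual operators
      set D : Fin d → Module.End ℂ (Module.Dual ℂ (X ⧸ M)) := fun j =>
        (T j).dualMap with hDdef
      haveI : Nontrivial (Module.Dual ℂ (X ⧸ M)) := by
        obtain ⟨v, hv⟩ := exists_ne (0 : X ⧸ M)
        by_contra h
        rw [not_nontrivial_iff_subsingleton] at h
        refine hv ((Module.forall_dual_apply_eq_zero_iff ℂ v).mp fun φ => ?_)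
        rw [Subsingleton.elim φ 0]
        rfl
      have hDcomm : ∀ i j, Commute (D i) (D j) := by
        intro i j
        apply LinearMap.ext; intro φ; apply LinearMap.ext; intro x
        simp only [Module.End.mul_apply, hDdef, LinearMap.dualMap_apply, LinearMap.comp_apply]
        exact congrArg φ (congrFun (congrArg DFunLike.coe (hTcomm j i)) x)
      obtain ⟨lam, hlam0, w, hw⟩ := my_exists_common_eigenvector d D hDcomm
      -- the continuous functional
      set Λ₀ : X →ₗ[ℂ] ℂ := lam ∘ₗ M.mkQ with hΛ₀def
      have hΛ₀cont : Continuous Λ₀ := by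
        rw [hΛ₀def, LinearMap.coe_comp]
        exact (LinearMap.continuous_of_finiteDimensional lam).comp hcontmk
      have hXj : ∀ (j : Fin d) (F : X),
          Λ₀ (H.mul (MvPolynomial.X j) F) = w j * Λ₀ F := by
        intro j F
        have h1 : Λ₀ (H.mul (MvPolynomial.X j) F) = lam (T j (M.mkQ F)) := by
          rw [hΛ₀def, LinearMap.comp_apply, hTmk]
        have h2 : lam (T j (M.mkQ F)) = (D j lam) (M.mkQ F) := rfl
        rw [h1, h2, hw j]
        rfl
      have hkey : ∀ Q : MvPolynomial (Fin d) ℂ, ∀ F : X,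
          Λ₀ (H.mul Q F) = MvPolynomial.eval w Q * Λ₀ F := by
        intro Q
        induction Q using MvPolynomial.induction_on with
        | C a =>
            intro F
            rw [H.my_mul_C, map_smul, smul_eq_mul, MvPolynomial.eval_C]
        | add p q hp hq =>
            intro F
            rw [H.my_mul_add, map_add, hp, hq, map_add]
            ring
        | mul_X p j hp =>
            intro F
            rw [H.my_mul_mul, hp, hXj, map_mul, MvPolynomial.eval_X]
            ring
      have hpolyΛ : ∀ Q : MvPolynomial (Fin d) ℂ,
          Λ₀ (H.poly Q) = MvPolynomial.eval w Q * Λ₀ (H.poly 1) := by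
        intro Q
        have h : H.poly Q = H.mul Q (H.poly 1) := by rw [H.my_mul_poly, mul_one]
        rw [h, hkey]
      set c := Λ₀ (H.poly 1) with hcdef
      have hc0 : c ≠ 0 := by
        intro h0
        have hzero : ⇑Λ₀ = fun _ : X => (0 : ℂ) := by
          refine Continuous.ext_on H.dense_poly hΛ₀cont continuous_const ?_
          rintro x ⟨Q, rfl⟩
          show Λ₀ (H.poly Q) = 0
          rw [hpolyΛ, h0, mul_zero]
        obtain ⟨v, hv⟩ : ∃ v, lam v ≠ 0 := by
          by_contra h
          push_neg at h
          exact hlam0 (LinearMap.ext fun v => h v)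
        obtain ⟨F, rfl⟩ := Submodule.mkQ_surjective M v
        have : Λ₀ F = 0 := congrFun hzero F
        rw [hΛ₀def, LinearMap.comp_apply] at this
        exact hv this
      have hwmax : w ∈ H.maxDomain := by
        refine ⟨c⁻¹ • ⟨Λ₀, hΛ₀cont⟩, fun P => ?_⟩
        rw [ContinuousLinearMap.smul_apply]
        show c⁻¹ • Λ₀ (H.poly P) = MvPolynomial.eval w P
        rw [hpolyΛ, smul_eq_mul]
        field_simp
      have hwV : ∀ P ∈ ℱ, MvPolynomial.eval w P = 0 := by
        intro P hP
        have hPmem : P ∈ Ideal.span {g} * 𝔦 := by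
          rw [← h𝔦]; exact Ideal.subset_span hP
        obtain ⟨s, hs, rfl⟩ := Ideal.mem_span_singleton_mul.mp hPmem
        have hmem : H.poly (g * s) ∈ M :=
          Submodule.le_topologicalClosure _
            (Submodule.subset_span ⟨g * s, ⟨s, hs, rfl⟩, rfl⟩)
        have hq0 : M.mkQ (H.poly (g * s)) = 0 := by
          rw [Submodule.mkQ_apply, Submodule.Quotient.mk_eq_zero]
          exact hmem
        have hΛ0 : Λ₀ (H.poly (g * s)) = 0 := by
          rw [hΛ₀def, LinearMap.comp_apply, hq0, map_zero]
        rw [hpolyΛ] at hΛ0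
        exact (mul_eq_zero.mp hΛ0).resolve_right hc0
      have hwmem : w ∈ ({w : Fin d → ℂ | ∀ P ∈ ℱ, MvPolynomial.eval w P = 0}
          ∩ H.maxDomain) := ⟨hwV, hwmax⟩
      rw [hempty] at hwmem
      exact hwmem
    -- conclude
    rw [H.my_jointlyCyclic_iff]
    rw [eq_top_iff, ← hMtop, hMdef]
    refine Submodule.topologicalClosure_minimal _ ?_ ?_
    · rw [Submodule.span_le]
      rintro y ⟨u, ⟨s, hs, rfl⟩, rfl⟩
      rw [SetLike.mem_coe]
      refine H.my_poly_mem_jointSub ?_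
      rw [h𝔦]
      exact Ideal.mul_mem_mul (Ideal.subset_span rfl) hs
    · exact Submodule.isClosed_topologicalClosure _
end

section
/- Let Ω ⊆ ℂ^d be open and let 𝒳 be a metrizable topological vector space of holomorphic functions on Ω satisfying (P1)–(P3). Then the maximal domain Ω_max is an F_σ subset of ℂ^d, i.e., a countable union of closed sets. -/
open HoloFunSpace in
/-- If `X` is a (Hausdorff) topological vector space of holomorphic
functions on an open `Ω ⊆ ℂ^d` satisfying (P1)-(P3) whose topology is induced by a
translation-invariant metric, then `Ω_max` is an `F_σ` subset of `ℂ^d`. -/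
theorem maxDomain_isFSigma
    {d : ℕ} {Ω : Set (Fin d → ℂ)} {X : Type*}
    [AddCommGroup X] [Module ℂ X] [MetricSpace X]
    [IsTopologicalAddGroup X] [ContinuousSMul ℂ X]
    (hdist : ∀ a x y : X, dist (a + x) (a + y) = dist x y)
    (hΩ : IsOpen Ω) (H : HoloFunSpace d Ω X) :
    ∃ C : ℕ → Set (Fin d → ℂ), (∀ n, IsClosed (C n)) ∧ H.maxDomain = ⋃ n, C n := by
  classical
  have hdist0 : ∀ x y : X, dist x y = dist (x - y) 0 := by
    intro x y
    have h := hdist y (x - y) 0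
    simpa using h
  have hnsmul : ∀ (m : ℕ) (x : X), dist (m • x) 0 ≤ (m : ℝ) * dist x 0 := by
    intro m x
    induction m with
    | zero => simp
    | succ k ih =>
      have h1 : dist ((k + 1) • x) 0 ≤ dist ((k + 1) • x) x + dist x 0 := dist_triangle _ _ _
      have h2 : dist ((k + 1) • x) x = dist (k • x) 0 := by
        have h := hdist x (k • x) 0
        rw [add_zero] at h
        rw [succ_nsmul, add_comm, ← h]
      push_cast
      calc dist ((k + 1) • x) 0 ≤ dist (k • x) 0 + dist x 0 := by rw [← h2]; exact h1
        _ ≤ (k : ℝ) * dist x 0 + dist x 0 := by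
            have := ih
            linarith
        _ = ((k : ℝ) + 1) * dist x 0 := by ring
  refine ⟨fun n => ⋂ P : MvPolynomial (Fin d) ℂ,
    {w | dist (H.poly P) 0 ≤ 1 / ((n : ℝ) + 1) → ‖MvPolynomial.eval w P‖ ≤ (n : ℝ) + 1},
    ?_, ?_⟩
  · intro n
    refine isClosed_iInter fun P => ?_
    by_cases h : dist (H.poly P) 0 ≤ 1 / ((n : ℝ) + 1)
    · have heq : {w : Fin d → ℂ | dist (H.poly P) 0 ≤ 1 / ((n : ℝ) + 1) →
          ‖MvPolynomial.eval w P‖ ≤ (n : ℝ) + 1}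
          = {w : Fin d → ℂ | ‖MvPolynomial.eval w P‖ ≤ (n : ℝ) + 1} := by
        ext w
        simp only [Set.mem_setOf_eq]
        exact ⟨fun hx => hx h, fun hx _ => hx⟩
      rw [heq]
      exact isClosed_le (MvPolynomial.continuous_eval P).norm continuous_const
    · have heq : {w : Fin d → ℂ | dist (H.poly P) 0 ≤ 1 / ((n : ℝ) + 1) →
          ‖MvPolynomial.eval w P‖ ≤ (n : ℝ) + 1} = Set.univ := by
        ext w
        simp only [Set.mem_setOf_eq, Set.mem_univ, iff_true]
        exact fun hc => absurd hc h
      rw [heq]; exact isClosed_univ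
  · ext w
    simp only [Set.mem_iUnion]
    constructor
    · rintro ⟨Λ, hΛ⟩
      have h0 : ContinuousAt Λ 0 := Λ.continuous.continuousAt
      rw [Metric.continuousAt_iff] at h0
      obtain ⟨δ, hδ, hδ'⟩ := h0 1 one_pos
      obtain ⟨n, hn⟩ := exists_nat_one_div_lt hδ
      refine ⟨n, Set.mem_iInter.2 fun P hP => ?_⟩
      have h1 : dist (H.poly P) 0 < δ := lt_of_le_of_lt hP hn
      have h2 := hδ' h1
      rw [map_zero, dist_zero_right, hΛ] at h2
      have hn0 : (0 : ℝ) ≤ n := Nat.cast_nonneg n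
      linarith [h2.le]
    · rintro ⟨n, hw⟩
      have hw' : ∀ P : MvPolynomial (Fin d) ℂ, dist (H.poly P) 0 ≤ 1 / ((n : ℝ) + 1) →
          ‖MvPolynomial.eval w P‖ ≤ (n : ℝ) + 1 := fun P => Set.mem_iInter.1 hw P
      set ψ : MvPolynomial (Fin d) ℂ →ₗ[ℂ] ℂ :=
        { toFun := fun P => MvPolynomial.eval w P
          map_add' := by intro P Q; simp
          map_smul' := by intro c P; simp } with hψ
      have hψapp : ∀ P, ψ P = MvPolynomial.eval w P := fun P => rfl
      have hker : LinearMap.ker H.poly ≤ LinearMap.ker ψ := by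
        intro P hP
        rw [LinearMap.mem_ker] at hP ⊢
        by_contra hne
        have habs : 0 < ‖ψ P‖ := norm_pos_iff.2 hne
        set t : ℂ := ((((n : ℝ) + 2) / ‖ψ P‖ : ℝ) : ℂ) with ht
        have h1 : H.poly (t • P) = 0 := by rw [map_smul, hP, smul_zero]
        have h2 : dist (H.poly (t • P)) 0 ≤ 1 / ((n : ℝ) + 1) := by
          rw [h1, dist_self]; positivity
        have h3 := hw' (t • P) h2
        have h4 : MvPolynomial.eval w (t • P) = t * ψ P := by
          rw [hψapp]; simp
        rw [h4, norm_mul] at h3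
        have h5 : ‖t‖ = ((n : ℝ) + 2) / ‖ψ P‖ := by
          rw [ht, Complex.norm_real, Real.norm_eq_abs, abs_of_pos (by positivity)]
        rw [h5, div_mul_cancel₀ _ (ne_of_gt habs)] at h3
        linarith
      set D := LinearMap.range H.poly with hD
      set e : D → X := Subtype.val with he
      have h_e : IsUniformInducing e := isUniformEmbedding_subtype_val.isUniformInducing
      have h_dense : DenseRange e := by
        have hr : Set.range e = (D : Set X) := Subtype.range_val
        rw [DenseRange, hr]
        exact H.dense_poly.mono (by rintro x ⟨P, hP⟩; exact ⟨P, hP⟩)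
      set Λ₀ : D →ₗ[ℂ] ℂ :=
        (Submodule.liftQ (LinearMap.ker H.poly) ψ hker).comp
          H.poly.quotKerEquivRange.symm.toLinearMap with hΛ₀
      have hΛ₀P : ∀ P : MvPolynomial (Fin d) ℂ,
          Λ₀ ⟨H.poly P, LinearMap.mem_range_self _ P⟩ = ψ P := by
        intro P
        have h1 : H.poly.quotKerEquivRange (Submodule.Quotient.mk P)
            = ⟨H.poly P, LinearMap.mem_range_self _ P⟩ :=
          Subtype.ext (LinearMap.quotKerEquivRange_apply_mk _ _)
        rw [hΛ₀, LinearMap.comp_apply, LinearEquiv.coe_toLinearMap, ← h1,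
          LinearEquiv.symm_apply_apply, Submodule.liftQ_apply]
      have hbound : ∀ F : D, dist (F : X) 0 ≤ 1 / ((n : ℝ) + 1) → ‖Λ₀ F‖ ≤ (n : ℝ) + 1 := by
        rintro ⟨x, hx⟩ hdx
        obtain ⟨P, rfl⟩ := hx
        rw [show (⟨H.poly P, _⟩ : D) = ⟨H.poly P, LinearMap.mem_range_self _ P⟩ from rfl, hΛ₀P]
        exact hw' P hdx
      have hUC : UniformContinuous (⇑Λ₀ : D → ℂ) := by
        rw [Metric.uniformContinuous_iff]
        intro ε hε
        obtain ⟨m, hm⟩ : ∃ m : ℕ, ((n : ℝ) + 1) / ((m : ℝ) + 1) < ε := by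
          obtain ⟨m, hm⟩ := exists_nat_gt (((n : ℝ) + 1) / ε)
          refine ⟨m, ?_⟩
          rw [div_lt_iff₀ (by positivity : (0:ℝ) < (m : ℝ) + 1)]
          rw [div_lt_iff₀ hε] at hm
          nlinarith
        refine ⟨1 / (((m : ℝ) + 1) * ((n : ℝ) + 1)), by positivity, ?_⟩
        intro F G hFG
        have hdFG : dist ((F - G : D) : X) 0 < 1 / (((m : ℝ) + 1) * ((n : ℝ) + 1)) := by
          have heq2 : dist ((F : X)) (G : X) = dist ((F - G : D) : X) 0 := by
            rw [hdist0 (F : X) (G : X)]; norm_cast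
          rw [← heq2]
          exact lt_of_le_of_lt (le_of_eq (Subtype.dist_eq F G).symm) hFG
        have h1 : dist (((m + 1) • (F - G) : D) : X) 0 ≤ 1 / ((n : ℝ) + 1) := by
          have hcoe : (((m + 1) • (F - G) : D) : X) = (m + 1) • ((F - G : D) : X) := by
            norm_cast
          rw [hcoe]
          calc dist ((m + 1) • ((F - G : D) : X)) 0
              ≤ (((m + 1 : ℕ)) : ℝ) * dist ((F - G : D) : X) 0 := hnsmul (m + 1) _
            _ ≤ (((m + 1 : ℕ)) : ℝ) * (1 / (((m : ℝ) + 1) * ((n : ℝ) + 1))) :=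
                mul_le_mul_of_nonneg_left hdFG.le (by positivity)
            _ = 1 / ((n : ℝ) + 1) := by push_cast; field_simp
        have h2 := hbound ((m + 1) • (F - G)) h1
        rw [map_nsmul, nsmul_eq_mul, norm_mul] at h2
        have h3 : ‖((m + 1 : ℕ) : ℂ)‖ = (m : ℝ) + 1 := by
          rw [Complex.norm_natCast]; push_cast; ring
        rw [h3] at h2
        have h4 : ‖Λ₀ (F - G)‖ ≤ ((n : ℝ) + 1) / ((m : ℝ) + 1) := by
          rw [le_div_iff₀ (by positivity : (0:ℝ) < (m : ℝ) + 1)]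
          linarith
        calc dist (Λ₀ F) (Λ₀ G) = ‖Λ₀ F - Λ₀ G‖ := dist_eq_norm _ _
          _ = ‖Λ₀ (F - G)‖ := by rw [map_sub]
          _ ≤ ((n : ℝ) + 1) / ((m : ℝ) + 1) := h4
          _ < ε := hm
      have cont : Continuous ((h_e.isDenseInducing h_dense).extend ⇑Λ₀) :=
        (uniformContinuous_uniformly_extend h_e h_dense hUC).continuous
      have heq : ∀ F : D, (h_e.isDenseInducing h_dense).extend ⇑Λ₀ (e F) = Λ₀ F :=
        fun F => uniformly_extend_of_ind h_e h_dense hUC F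
      refine ⟨{ toFun := (h_e.isDenseInducing h_dense).extend ⇑Λ₀
                map_add' := ?_
                map_smul' := ?_
                cont := cont }, ?_⟩
      · refine fun x y => h_dense.induction_on₂
          (p := fun a b => (h_e.isDenseInducing h_dense).extend ⇑Λ₀ (a + b)
            = (h_e.isDenseInducing h_dense).extend ⇑Λ₀ a
              + (h_e.isDenseInducing h_dense).extend ⇑Λ₀ b) ?_ ?_ x y
        · exact isClosed_eq (cont.comp continuous_add)
            ((cont.comp continuous_fst).add (cont.comp continuous_snd))
        · intro a b
          have hab : e a + e b = e (a + b) := rfl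
          rw [hab, heq, heq, heq, map_add]
      · intro c
        refine fun x => h_dense.induction_on
          (p := fun a => (h_e.isDenseInducing h_dense).extend ⇑Λ₀ (c • a)
            = (RingHom.id ℂ) c • (h_e.isDenseInducing h_dense).extend ⇑Λ₀ a) x ?_ ?_
        · exact isClosed_eq (cont.comp (continuous_const_smul _))
            ((continuous_const_smul _).comp cont)
        · intro a
          have hca : c • e a = e (c • a) := rfl
          rw [hca, heq, heq, map_smul]
          rfl
      · intro P
        show (h_e.isDenseInducing h_dense).extend ⇑Λ₀ (H.poly P) = _
        have hpe : H.poly P = e ⟨H.poly P, LinearMap.mem_range_self _ P⟩ := rfl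
        rw [hpe, heq, hΛ₀P, hψapp]
end

section
/- Let Γ ⊆ 𝕋 be a closed subset of the unit circle, and let v(z) = exp(−dist(z/|z|, Γ)/(1 − |z|)) for z ∈ 𝔻 \ {0}. Then there exists a constant C > 0 such that for every w ∈ 𝕋 \ Γ, ∫_𝔻 |z − w|^{−6} v(z) dA(z) ≤ C · dist(w, Γ)^{−6}; in particular, the function z ↦ 1/(z − w)³ has finite norm in L²_a(𝔻, v) for every w ∈ 𝕋 \ Γ. -/
open Metric MeasureTheory

/-- The normalized area measure `dA = dx dy / π` on `ℂ`. -/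
noncomputable def dA : Measure ℂ := (ENNReal.ofReal Real.pi)⁻¹ • volume

/-- The weight `v(z) = exp(−dist(z/|z|, Γ)/(1 − |z|))` associated with a closed set
`Γ ⊆ 𝕋`. -/
noncomputable def weightGamma (Γ : Set ℂ) (z : ℂ) : ℝ :=
  Real.exp (-(Metric.infDist (z / (‖z‖ : ℂ)) Γ) / (1 - ‖z‖))

lemma weightGamma_le_one (Γ : Set ℂ) {z : ℂ} (hz : ‖z‖ < 1) : weightGamma Γ z ≤ 1 := by
  rw [weightGamma, Real.exp_le_one_iff]
  apply div_nonpos_of_nonpos_of_nonneg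
  · simpa using Metric.infDist_nonneg
  · linarith

lemma exp_neg_le_aux {x : ℝ} (hx : 0 < x) : Real.exp (-x) ≤ 7 ^ 7 / x ^ 7 := by
  have h2 : x / 7 ≤ Real.exp (x / 7) := by
    have := Real.add_one_le_exp (x / 7); linarith
  have h1 : x ^ 7 / 7 ^ 7 ≤ Real.exp x := by
    calc x ^ 7 / 7 ^ 7 = (x / 7) ^ 7 := by ring
      _ ≤ Real.exp (x / 7) ^ 7 := pow_le_pow_left₀ (by positivity) h2 7
      _ = Real.exp ((7 : ℕ) * (x / 7)) := (Real.exp_nat_mul _ 7).symm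
      _ = Real.exp x := by push_cast; ring_nf
  rw [Real.exp_neg]
  calc (Real.exp x)⁻¹ ≤ (x ^ 7 / 7 ^ 7)⁻¹ := by
        apply inv_anti₀ (by positivity) h1
    _ = 7 ^ 7 / x ^ 7 := by rw [inv_div]

lemma key_pointwise (Γ : Set ℂ) (hΓ : Γ ⊆ sphere (0 : ℂ) 1) (hΓne : Γ.Nonempty)
    {w z : ℂ} (hw : ‖w‖ = 1) (hd : 0 < Metric.infDist w Γ) (hz : ‖z‖ < 1) :
    (1 / ‖z - w‖ ^ 6) * weightGamma Γ z ≤ 100000000 / Metric.infDist w Γ ^ 6 := by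
  set d := Metric.infDist w Γ with hdd
  set r := ‖z - w‖ with hr
  have hrpos : 0 < r := by
    rw [hr, norm_sub_pos_iff]
    intro h; rw [h, hw] at hz; exact absurd hz (lt_irrefl 1)
  have h1z : 1 - ‖z‖ ≤ r := by
    have h := norm_sub_norm_le w z
    rw [hw] at h
    calc 1 - ‖z‖ ≤ ‖w - z‖ := h
      _ = r := by rw [hr, norm_sub_rev]
  have hv1 := weightGamma_le_one Γ hz
  have hvpos : (0 : ℝ) < weightGamma Γ z := Real.exp_pos _
  rcases le_or_gt (d / 4) r with hcase | hcase
  · calc (1 / r ^ 6) * weightGamma Γ z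
        ≤ (1 / r ^ 6) * 1 := mul_le_mul_of_nonneg_left hv1 (by positivity)
      _ = 1 / r ^ 6 := mul_one _
      _ ≤ 4096 / d ^ 6 := by
          rw [div_le_div_iff₀ (by positivity) (by positivity)]
          calc 1 * d ^ 6 = d ^ 6 := one_mul _
            _ ≤ (4 * r) ^ 6 := pow_le_pow_left₀ hd.le (by linarith) 6
            _ = 4096 * r ^ 6 := by ring
      _ ≤ 100000000 / d ^ 6 := by gcongr; norm_num
  · -- inner region : r < d/4
    obtain ⟨γ, hγ⟩ := hΓne
    have hγ1 : ‖γ‖ = 1 := by simpa [mem_sphere_iff_norm] using hΓ hγ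
    have hd2 : d ≤ 2 := by
      have h1 : d ≤ dist w γ := Metric.infDist_le_dist_of_mem hγ
      have h2 : dist w γ ≤ ‖w‖ + ‖γ‖ := by rw [dist_eq_norm]; exact norm_sub_le _ _
      rw [hw, hγ1] at h2; linarith
    have hrlt : r < 1 / 2 := by linarith
    have hz0 : (0 : ℝ) < ‖z‖ := by linarith
    have hzcne : (‖z‖ : ℂ) ≠ 0 := by
      exact_mod_cast ne_of_gt hz0
    set u := z / (‖z‖ : ℂ) with hu
    have huz : dist u z = 1 - ‖z‖ := by
      have h2 : u - z = ((‖z‖⁻¹ - 1 : ℝ) : ℂ) * z := by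
        rw [hu]; push_cast; field_simp
      have hinv : (1 : ℝ) ≤ ‖z‖⁻¹ := (one_le_inv₀ hz0).2 hz.le
      rw [dist_eq_norm, h2, norm_mul, Complex.norm_real, Real.norm_eq_abs,
        abs_of_nonneg (by linarith)]
      rw [sub_mul, inv_mul_cancel₀ hz0.ne', one_mul]
    have hD : d - 2 * r ≤ Metric.infDist u Γ := by
      have h3 : Metric.infDist w Γ ≤ Metric.infDist u Γ + dist w u :=
        Metric.infDist_le_infDist_add_dist
      have h4 : dist w u ≤ dist w z + dist z u := dist_triangle _ _ _
      have h5 : dist z u = 1 - ‖z‖ := by rw [dist_comm]; exact huz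
      have h6 : dist w z = r := by rw [dist_comm, dist_eq_norm, ← hr]
      rw [← hdd] at h3
      linarith
    have h1zpos : (0 : ℝ) < 1 - ‖z‖ := by linarith
    have hexp : weightGamma Γ z ≤ Real.exp (-(d / (2 * r))) := by
      rw [weightGamma, ← hu, Real.exp_le_exp, neg_div, neg_le_neg_iff]
      calc d / (2 * r) = (d / 2) / r := by ring
        _ ≤ (d / 2) / (1 - ‖z‖) := by gcongr
        _ ≤ Metric.infDist u Γ / (1 - ‖z‖) := by gcongr; linarith
    have hbound : weightGamma Γ z ≤ 7 ^ 7 / (d / (2 * r)) ^ 7 :=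
      hexp.trans (exp_neg_le_aux (by positivity))
    have hrne : r ≠ 0 := hrpos.ne'
    have hdne : d ≠ 0 := hd.ne'
    calc (1 / r ^ 6) * weightGamma Γ z
        ≤ (1 / r ^ 6) * (7 ^ 7 / (d / (2 * r)) ^ 7) :=
          mul_le_mul_of_nonneg_left hbound (by positivity)
      _ = (7 ^ 7 * 2 ^ 7) * r / d ^ 7 := by field_simp
      _ ≤ (7 ^ 7 * 2 ^ 7) * (d / 4) / d ^ 7 := by gcongr
      _ = 26353376 / d ^ 6 := by field_simp; ring
      _ ≤ 100000000 / d ^ 6 := by gcongr; norm_num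

lemma weightGamma_measurable (Γ : Set ℂ) :
    Measurable (weightGamma Γ) := by
  apply Real.measurable_exp.comp
  apply Measurable.div
  · exact (measurable_infDist.comp
      (measurable_id.div (Complex.measurable_ofReal.comp measurable_norm))).neg
  · exact measurable_const.sub measurable_norm

/-- Let `Γ ⊆ 𝕋` be closed (and nonempty, as is implicit: for `Γ = ∅`
the distance to `Γ` is `+∞` and the weight degenerates) and let
`v(z) = exp(−dist(z/|z|, Γ)/(1 − |z|))`.  There is a constant `C > 0` such that for
every `w ∈ 𝕋 \ Γ`,
`∫_𝔻 |z − w|⁻⁶ v(z) dA(z) ≤ C ⋅ dist(w, Γ)⁻⁶`; in particular `z ↦ 1/(z−w)³` has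
finite norm in `L²_a(𝔻, v)`, i.e. `|z − w|⁻⁶ v` is integrable on `𝔻`. -/
theorem weighted_integral_bound (Γ : Set ℂ) (hΓ : Γ ⊆ sphere (0 : ℂ) 1)
    (hΓclosed : IsClosed Γ) (hΓne : Γ.Nonempty) :
    ∃ C > (0 : ℝ), ∀ w ∈ sphere (0 : ℂ) 1 \ Γ,
      IntegrableOn (fun z => (1 / ‖z - w‖ ^ 6) * weightGamma Γ z) (ball (0 : ℂ) 1) dA ∧
      (∫ z in ball (0 : ℂ) 1, (1 / ‖z - w‖ ^ 6) * weightGamma Γ z ∂dA)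
        ≤ C / Metric.infDist w Γ ^ 6 := by
  set M : ℝ := (dA (ball (0 : ℂ) 1)).toReal with hM
  have hfin : dA (ball (0 : ℂ) 1) < ⊤ := by
    rw [dA, Measure.smul_apply, smul_eq_mul]
    exact ENNReal.mul_lt_top
      (ENNReal.inv_lt_top.mpr (ENNReal.ofReal_pos.mpr Real.pi_pos))
      measure_ball_lt_top
  have hMnn : 0 ≤ M := ENNReal.toReal_nonneg
  refine ⟨100000000 * M + 1, by positivity, ?_⟩
  intro w hw
  obtain ⟨hw1, hw2⟩ := hw
  have hwn : ‖w‖ = 1 := by simpa [mem_sphere_iff_norm] using hw1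
  have hd : 0 < Metric.infDist w Γ :=
    (hΓclosed.notMem_iff_infDist_pos hΓne).1 hw2
  set d := Metric.infDist w Γ with hdd
  have hmeas : Measurable (fun z : ℂ => (1 / ‖z - w‖ ^ 6) * weightGamma Γ z) := by
    apply Measurable.mul
    · exact measurable_const.div (((measurable_id.sub measurable_const).norm).pow measurable_const)
    · exact weightGamma_measurable Γ
  have hptwise : ∀ z ∈ ball (0 : ℂ) 1,
      (1 / ‖z - w‖ ^ 6) * weightGamma Γ z ≤ 100000000 / d ^ 6 := by
    intro z hz
    exact key_pointwise Γ hΓ hΓne hwn hd (by simpa [mem_ball, dist_eq_norm] using hz)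
  have hconst : IntegrableOn (fun _ : ℂ => 100000000 / d ^ 6) (ball (0 : ℂ) 1) dA :=
    integrableOn_const hfin.ne
  have hint : IntegrableOn (fun z => (1 / ‖z - w‖ ^ 6) * weightGamma Γ z)
      (ball (0 : ℂ) 1) dA := by
    apply Integrable.mono' hconst hmeas.aestronglyMeasurable
    filter_upwards [ae_restrict_mem measurableSet_ball] with z hz
    have hnn : 0 ≤ (1 / ‖z - w‖ ^ 6) * weightGamma Γ z :=
      mul_nonneg (by positivity) (Real.exp_pos _).le
    rw [Real.norm_of_nonneg hnn]
    exact hptwise z hz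
  refine ⟨hint, ?_⟩
  calc (∫ z in ball (0 : ℂ) 1, (1 / ‖z - w‖ ^ 6) * weightGamma Γ z ∂dA)
      ≤ ∫ _ in ball (0 : ℂ) 1, (100000000 / d ^ 6 : ℝ) ∂dA :=
        setIntegral_mono_on hint hconst measurableSet_ball hptwise
    _ = M * (100000000 / d ^ 6) := by rw [setIntegral_const, smul_eq_mul, hM, measureReal_def]
    _ = (100000000 * M) / d ^ 6 := by ring
    _ ≤ (100000000 * M + 1) / d ^ 6 := by gcongr; linarith
end
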